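/- arXiv:2303.12774 — 5 statements merged into one kernel-verified Lean document; each statement's English description precedes it below -/
import Mathlib

section
/- Let G be a finite simple graph and let E0 be the set of edges of G that are not contained in any perfect 2-matching of G. If G1, G2, …, Gk are the connected components of the graph G − E0 obtained by deleting the edges of E0, then det(G) = ∏_{i=1}^k det(Gi). -/
open scoped Classical

namespace SignInv

variable {V : Type*} {W : Type*}

/-- The adjacency matrix of `G` over `ℚ`. -/
noncomputable def adjM [Fintype V] (G : SimpleGraph V) : Matrix V V ℚ :=
  G.adjMatrix ℚ

/-- The determinant of (the adjacency matrix of) `G`; it equals `1` for the empty graph. -/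
noncomputable def detG [Fintype V] (G : SimpleGraph V) : ℚ :=
  (adjM G).det

/-- `G` is unimodular if `det G ∈ {-1, 1}`. -/
def Unimodular [Fintype V] (G : SimpleGraph V) : Prop :=
  detG G = 1 ∨ detG G = -1

/-- `G` is invertible if `det G ≠ 0`. -/
def InvertibleGraph [Fintype V] (G : SimpleGraph V) : Prop :=
  detG G ≠ 0

/-- `G` is sign-invertible if its adjacency matrix is invertible and all entries of the
inverse matrix lie in `{-1, 0, 1}`. -/
def SignInvertible [Fintype V] (G : SimpleGraph V) : Prop :=
  IsUnit (adjM G) ∧ ∀ x y : V, (adjM G)⁻¹ x y ∈ ({-1, 0, 1} : Set ℚ)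

/-- A perfect 2-matching of `G`: a spanning subgraph each of whose components is a cycle or
a single edge, i.e. all degrees are `1` or `2` and a degree-one vertex is matched to a
degree-one vertex. -/
def IsPerfect2Matching [Fintype V] (G : SimpleGraph V) (H : G.Subgraph) : Prop :=
  H.IsSpanning ∧ (∀ v : V, H.degree v = 1 ∨ H.degree v = 2) ∧
    ∀ v w : V, H.Adj v w → H.degree v = 1 → H.degree w = 1

def HasPerfect2Matching [Fintype V] (G : SimpleGraph V) : Prop :=
  ∃ H : G.Subgraph, IsPerfect2Matching G H

/-- A feasible `(x,y)`-path: a path `P` such that `G - V(P)` has a perfect 2-matching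
(the empty graph counts as having one). -/
def FeasiblePath [Fintype V] (G : SimpleGraph V) {x y : V} (P : G.Walk x y) : Prop :=
  P.IsPath ∧ HasPerfect2Matching (G.induce {v : V | v ∉ P.support})

/-- `∑_{P ∈ 𝒫_{xy}} (-1)^{|E(P)|} det (G - V(P))` over all feasible `(x,y)`-paths. -/
noncomputable def pathSum [Fintype V] (G : SimpleGraph V) (x y : V) : ℚ :=
  ∑ᶠ (P : G.Walk x y) (_ : FeasiblePath G P),
    (-1 : ℚ) ^ P.length * detG (G.induce {v : V | v ∉ P.support})

/-- One `K₂`-reduction step: `v ∈ s` has a unique neighbour `u` inside `s`, and both are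
removed from `s`. -/
def K2Step (G : SimpleGraph V) (s t : Set V) : Prop :=
  ∃ u v : V, u ∈ s ∧ v ∈ s ∧ G.Adj u v ∧ (∀ w ∈ s, G.Adj v w → w = u) ∧
    t = s \ {u, v}

/-- `G` is `K₂`-reducible if some sequence of `K₂`-reductions empties the vertex set. -/
def K2Reducible (G : SimpleGraph V) : Prop :=
  Relation.ReflTransGen (K2Step G) Set.univ (∅ : Set V)

/-- `v` has degree one in the subgraph of `G` induced on `s`. -/
def DegreeOneIn (G : SimpleGraph V) (s : Set V) (v : V) : Prop :=
  v ∈ s ∧ ∃ u ∈ s, G.Adj v u ∧ ∀ w ∈ s, G.Adj v w → w = u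

/-- `s` induces a `K₂`-irreducible subgraph of `G`: it is obtained from `G` by a sequence of
`K₂`-reductions and has no vertex of degree one. -/
def K2Irreducible (G : SimpleGraph V) (s : Set V) : Prop :=
  Relation.ReflTransGen (K2Step G) Set.univ s ∧ ∀ v : V, ¬ DegreeOneIn G s v

/-- `v` has degree one in `H`. -/
def DegreeOne (H : SimpleGraph W) (v : W) : Prop :=
  ∃! u : W, H.Adj v u

/-- A peg of the cycle `C` is an edge of the matching `M` with exactly one endpoint on `C`. -/
def IsPeg (G : SimpleGraph V) (M : G.Subgraph) {c : V} (C : G.Walk c c)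
    (e : Sym2 V) : Prop :=
  e ∈ M.edgeSet ∧ ∃ u v : V, e = s(u, v) ∧ u ∈ C.support ∧ v ∉ C.support

noncomputable def pegCount (G : SimpleGraph V) (M : G.Subgraph) {c : V}
    (C : G.Walk c c) : ℕ :=
  {e : Sym2 V | IsPeg G M C e}.ncard

/-- `v` is the attachment of the peg `e` of the cycle `C`. -/
def IsAttachment (G : SimpleGraph V) (M : G.Subgraph) {c : V} (C : G.Walk c c)
    (e : Sym2 V) (v : V) : Prop :=
  IsPeg G M C e ∧ v ∈ e ∧ v ∈ C.support

/-- `v1, v2` separate the cycle `C` into two paths whose numbers of vertices are both even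
and not congruent to each other modulo 4. -/
def SeparatesEvenNoncong (G : SimpleGraph V) {c : V} (C : G.Walk c c)
    (v1 v2 : V) : Prop :=
  ∃ (W1 W2 : G.Walk v1 v2), W1.IsPath ∧ W2.IsPath ∧
    (∀ e : Sym2 V, e ∈ C.edges ↔ (e ∈ W1.edges ∨ e ∈ W2.edges)) ∧
    (∀ e : Sym2 V, e ∈ W1.edges → e ∉ W2.edges) ∧
    W1.support.length % 2 = 0 ∧ W2.support.length % 2 = 0 ∧
    ¬ (W1.support.length % 4 = W2.support.length % 4)

/-- The peg condition for a cycle `C`: at least three pegs, or exactly two pegs whose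
attachments separate `C` into two paths with even, non-congruent (mod 4) numbers of
vertices. -/
def PegCondition (G : SimpleGraph V) (M : G.Subgraph) {c : V}
    (C : G.Walk c c) : Prop :=
  3 ≤ pegCount G M C ∨
  (pegCount G M C = 2 ∧
    ∀ (e1 e2 : Sym2 V) (v1 v2 : V), e1 ≠ e2 →
      IsAttachment G M C e1 v1 → IsAttachment G M C e2 v2 →
      SeparatesEvenNoncong G C v1 v2)

/-- Every vertex of `s` has at least two neighbours inside `s`. -/
def MinDeg2On (G : SimpleGraph V) (s : Set V) : Prop :=
  ∀ v ∈ s, ∃ u w : V, u ∈ s ∧ w ∈ s ∧ u ≠ w ∧ G.Adj v u ∧ G.Adj v w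

/-- The vertex set of the 2-core of `G` (maximal set inducing minimum degree ≥ 2). -/
def twoCoreSet (G : SimpleGraph V) : Set V :=
  ⋃₀ {s : Set V | MinDeg2On G s}

/-- All pegs of all cycles of `G`. -/
def pegSet (G : SimpleGraph V) (M : G.Subgraph) : Set (Sym2 V) :=
  {e | ∃ (c : V) (C : G.Walk c c), C.IsCycle ∧ IsPeg G M C e}

def semiTwoCoreVerts (G : SimpleGraph V) (M : G.Subgraph) : Set V :=
  twoCoreSet G ∪ {v | ∃ e ∈ pegSet G M, v ∈ e}

def semiTwoCoreEdges (G : SimpleGraph V) (M : G.Subgraph) : Set (Sym2 V) :=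
  {e | e ∈ G.edgeSet ∧ ∀ v ∈ e, v ∈ twoCoreSet G} ∪ pegSet G M

/-- The semi-2-core of `G`: the 2-core together with all pegs, as a graph. -/
def semiTwoCore (G : SimpleGraph V) (M : G.Subgraph) :
    SimpleGraph ↥(semiTwoCoreVerts G M) :=
  (G ⊓ SimpleGraph.fromEdgeSet (semiTwoCoreEdges G M)).induce (semiTwoCoreVerts G M)

/-- Witness data for `H` being a theta graph `Θ(a,b,c)` with central paths with vertex sets
`S1, S2, S3`: two distinct vertices joined by three internally disjoint paths having
`a`, `b`, `c` vertices, covering all vertices and all edges of `H`. -/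
def ThetaWitness (H : SimpleGraph W) (a b c : ℕ)
    (S1 S2 S3 : Set W) : Prop :=
  ∃ (x y : W) (P1 P2 P3 : H.Walk x y),
    x ≠ y ∧ P1.IsPath ∧ P2.IsPath ∧ P3.IsPath ∧
    P1.support.length = a ∧ P2.support.length = b ∧ P3.support.length = c ∧
    (∀ v : W, v ∈ P1.support → v ∈ P2.support → v = x ∨ v = y) ∧
    (∀ v : W, v ∈ P1.support → v ∈ P3.support → v = x ∨ v = y) ∧
    (∀ v : W, v ∈ P2.support → v ∈ P3.support → v = x ∨ v = y) ∧
    (∀ v : W, v ∈ P1.support ∨ v ∈ P2.support ∨ v ∈ P3.support) ∧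
    H.edgeSet = {e | e ∈ P1.edges ∨ e ∈ P2.edges ∨ e ∈ P3.edges} ∧
    S1 = {v | v ∈ P1.support} ∧ S2 = {v | v ∈ P2.support} ∧
    S3 = {v | v ∈ P3.support}

/-- `H` is a theta graph `Θ(a,b,c)`. -/
def IsThetaGraph (H : SimpleGraph W) (a b c : ℕ) : Prop :=
  ∃ S1 S2 S3 : Set W, ThetaWitness H a b c S1 S2 S3

/-- `H` is a barbell graph `B(a,b;t)`: two cycles of lengths `a` and `b` joined by a path
with `t` vertices internally disjoint from the cycles (for `t = 1` the cycles share exactly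
one vertex). -/
def IsBarbell (H : SimpleGraph W) (a b t : ℕ) : Prop :=
  ∃ (u v : W) (C1 : H.Walk u u) (C2 : H.Walk v v) (P : H.Walk u v),
    C1.IsCycle ∧ C2.IsCycle ∧ P.IsPath ∧
    C1.length = a ∧ C2.length = b ∧ P.support.length = t ∧
    (∀ w : W, w ∈ C1.support → w ∈ C2.support → w = u ∧ w = v) ∧
    (∀ w : W, w ∈ P.support → w ∈ C1.support → w = u) ∧
    (∀ w : W, w ∈ P.support → w ∈ C2.support → w = v) ∧
    (∀ w : W, w ∈ C1.support ∨ w ∈ C2.support ∨ w ∈ P.support) ∧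
    H.edgeSet = {e | e ∈ C1.edges ∨ e ∈ C2.edges ∨ e ∈ P.edges}

/-- `H` is a cycle graph of length `n`. -/
def IsCycleGraphOn (H : SimpleGraph W) (n : ℕ) : Prop :=
  ∃ (c : W) (C : H.Walk c c), C.IsCycle ∧ C.length = n ∧
    (∀ v : W, v ∈ C.support) ∧ H.edgeSet = {e | e ∈ C.edges}

/-- `P` is `MM`-alternating: the edges of `P` lying in `M` form a perfect matching of `P`. -/
def MMAlternating (G : SimpleGraph V) (M : G.Subgraph) {x y : V}
    (P : G.Walk x y) : Prop :=
  ∀ v ∈ P.support, ∃! e : Sym2 V, e ∈ P.edges ∧ e ∈ M.edgeSet ∧ v ∈ e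

/-- The number of feasible `(x,y)`-paths with an odd number of edges outside `M`. -/
noncomputable def tauOdd [Fintype V] (G : SimpleGraph V) (M : G.Subgraph)
    (x y : V) : ℕ :=
  {P : G.Walk x y | FeasiblePath G P ∧
    (P.edges.countP fun e => decide (e ∉ M.edgeSet)) % 2 = 1}.ncard

/-- The number of feasible `(x,y)`-paths with an even number of edges outside `M`. -/
noncomputable def tauEven [Fintype V] (G : SimpleGraph V) (M : G.Subgraph)
    (x y : V) : ℕ :=
  {P : G.Walk x y | FeasiblePath G P ∧
    (P.edges.countP fun e => decide (e ∉ M.edgeSet)) % 2 = 0}.ncard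

/-- A crab-graph: a `K₂`-reducible bicyclic graph whose 2-core is a theta graph, having
exactly two degree-one vertices `x`, `y` and exactly three feasible `(x,y)`-paths, each with
an even number of vertices, these numbers being not all congruent modulo 4. -/
def IsCrabGraph [Fintype W] (H : SimpleGraph W) : Prop :=
  K2Reducible H ∧ H.Connected ∧ H.edgeSet.ncard = Fintype.card W + 1 ∧
  (∃ a b c : ℕ, IsThetaGraph (H.induce (twoCoreSet H)) a b c) ∧
  ∃ x y : W, x ≠ y ∧ DegreeOne H x ∧ DegreeOne H y ∧
    (∀ v : W, DegreeOne H v → v = x ∨ v = y) ∧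
    ∃ P1 P2 P3 : H.Walk x y,
      FeasiblePath H P1 ∧ FeasiblePath H P2 ∧ FeasiblePath H P3 ∧
      P1 ≠ P2 ∧ P1 ≠ P3 ∧ P2 ≠ P3 ∧
      (∀ P : H.Walk x y, FeasiblePath H P → P = P1 ∨ P = P2 ∨ P = P3) ∧
      P1.support.length % 2 = 0 ∧ P2.support.length % 2 = 0 ∧
      P3.support.length % 2 = 0 ∧
      ¬ (P1.support.length % 4 = P2.support.length % 4 ∧
         P2.support.length % 4 = P3.support.length % 4)


/-- The set of edges of `G` not contained in any perfect 2-matching of `G`. -/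
def E0 [Fintype V] (G : SimpleGraph V) : Set (Sym2 V) :=
  {e | e ∈ G.edgeSet ∧ ∀ H : G.Subgraph, IsPerfect2Matching G H → e ∉ H.edgeSet}

def permSubgraph [Fintype V] (G : SimpleGraph V) (σ : Equiv.Perm V)
    (h : ∀ v, G.Adj (σ v) v) : G.Subgraph where
  verts := Set.univ
  Adj v w := w = σ v ∨ v = σ w
  adj_sub := by
    rintro v w (rfl | rfl)
    · exact (h v).symm
    · exact h w
  edge_vert := fun _ => trivial
  symm := ⟨fun v w hvw => hvw.symm⟩

lemma permSubgraph_neighborSet [Fintype V] (G : SimpleGraph V) (σ : Equiv.Perm V)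
    (h : ∀ v, G.Adj (σ v) v) (v : V) :
    (permSubgraph G σ h).neighborSet v = {σ v, σ⁻¹ v} := by
  ext w
  simp only [SimpleGraph.Subgraph.mem_neighborSet, permSubgraph, Set.mem_insert_iff,
    Set.mem_singleton_iff]
  constructor
  · rintro (rfl | rfl)
    · exact Or.inl rfl
    · right; simp
  · rintro (rfl | rfl)
    · exact Or.inl rfl
    · right; simp

lemma permSubgraph_degree [Fintype V] (G : SimpleGraph V) (σ : Equiv.Perm V)
    (h : ∀ v, G.Adj (σ v) v) (v : V) :
    (permSubgraph G σ h).degree v = if σ v = σ⁻¹ v then 1 else 2 := by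
  classical
  have hns := permSubgraph_neighborSet G σ h v
  rw [SimpleGraph.Subgraph.degree, Fintype.card_congr (Equiv.setCongr hns)]
  split_ifs with hc
  · rw [hc]; simp
  · rw [← Set.toFinset_card, Set.toFinset_insert, Set.toFinset_singleton,
      Finset.card_insert_of_notMem (by simpa using hc), Finset.card_singleton]

lemma permSubgraph_isP2M [Fintype V] (G : SimpleGraph V) (σ : Equiv.Perm V)
    (h : ∀ v, G.Adj (σ v) v) :
    IsPerfect2Matching G (permSubgraph G σ h) := by
  refine ⟨fun v => trivial, fun v => ?_, fun v w hvw hd => ?_⟩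
  · rw [permSubgraph_degree]
    split_ifs <;> simp
  · rw [permSubgraph_degree] at hd ⊢
    have h1 : σ v = σ⁻¹ v := by by_contra hc; simp [hc] at hd; exact hc hd
    have h2 : σ (σ v) = v := by rw [h1]; simp
    have hw : w = σ v := by
      rcases hvw with rfl | rfl
      · rfl
      · rw [h1]; simp
    subst hw
    rw [if_pos (by rw [h2]; simp)]

lemma det_deleteEdges_E0 [Fintype V] (G : SimpleGraph V) :
    (G.adjMatrix ℚ).det = ((G.deleteEdges (E0 G)).adjMatrix ℚ).det := by
  classical
  rw [Matrix.det_apply, Matrix.det_apply]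
  refine Finset.sum_congr rfl fun σ _ => ?_
  congr 1
  by_cases hall : ∀ v, G.Adj (σ v) v
  · refine Finset.prod_congr rfl fun v _ => ?_
    have hmem : s(σ v, v) ∈ (permSubgraph G σ hall).edgeSet := Or.inr rfl
    have hne0 : s(σ v, v) ∉ E0 G := fun hE0 =>
      hE0.2 (permSubgraph G σ hall) (permSubgraph_isP2M G σ hall) hmem
    have hadj : (G.deleteEdges (E0 G)).Adj (σ v) v :=
      SimpleGraph.deleteEdges_adj.2 ⟨hall v, hne0⟩
    rw [SimpleGraph.adjMatrix_apply, SimpleGraph.adjMatrix_apply,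
      if_pos (hall v), if_pos hadj]
  · push_neg at hall
    obtain ⟨v, hv⟩ := hall
    rw [Finset.prod_eq_zero (Finset.mem_univ v), Finset.prod_eq_zero (Finset.mem_univ v)]
    · rw [SimpleGraph.adjMatrix_apply, if_neg]
      intro hadj
      exact hv hadj.1
    · rw [SimpleGraph.adjMatrix_apply, if_neg hv]


lemma det_adj_eq_prod_components [Fintype V] (H : SimpleGraph V) :
    (H.adjMatrix ℚ).det =
      ∏ c : H.ConnectedComponent, ((H.induce c.supp).adjMatrix ℚ).det := by
  classical
  set A := H.adjMatrix ℚ with hA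
  set φ : H.ConnectedComponent ≃ Fin (Fintype.card H.ConnectedComponent) :=
    Fintype.equivFin _ with hφ
  set b : V → Fin (Fintype.card H.ConnectedComponent) :=
    fun v => φ (H.connectedComponentMk v) with hb
  have hzero : ∀ i j : V, b i ≠ b j → A i j = 0 := by
    intro i j hne
    rw [hA, SimpleGraph.adjMatrix_apply, if_neg]
    intro hadj
    apply hne
    show φ (H.connectedComponentMk i) = φ (H.connectedComponentMk j)
    exact congrArg φ (SimpleGraph.ConnectedComponent.sound hadj.reachable)
  have hBT : A.BlockTriangular b := fun i j hlt => hzero i j (ne_of_gt hlt)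
  have himg : Finset.image b Finset.univ = Finset.univ := by
    apply Finset.eq_univ_iff_forall.2
    intro a
    obtain ⟨v, hv⟩ := (φ.symm a).exists_rep
    refine Finset.mem_image.2 ⟨v, Finset.mem_univ _, ?_⟩
    show φ (H.connectedComponentMk v) = a
    have hv' : H.connectedComponentMk v = φ.symm a := hv
    rw [hv', Equiv.apply_symm_apply]
  have key : ∀ c : H.ConnectedComponent,
      (A.toSquareBlock b (φ c)).det = ((H.induce c.supp).adjMatrix ℚ).det := by
    intro c
    have hmem : ∀ v : V, v ∈ c.supp ↔ b v = φ c := by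
      intro v
      rw [SimpleGraph.ConnectedComponent.mem_supp_iff, hb]
      constructor
      · intro h
        show φ (H.connectedComponentMk v) = φ c
        rw [h]
      · intro h
        exact φ.injective h
    let ε : ↥c.supp ≃ {i // b i = φ c} := Equiv.subtypeEquivRight hmem
    have hmat : (A.toSquareBlock b (φ c)).submatrix ε ε
        = (H.induce c.supp).adjMatrix ℚ := by
      ext ⟨v, hv⟩ ⟨w, hw⟩
      simp [Matrix.toSquareBlock_def, Matrix.submatrix_apply, ε,
        Equiv.subtypeEquivRight, hA, SimpleGraph.comap_adj]
      rfl
    rw [← hmat, Matrix.det_submatrix_equiv_self]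
  rw [hBT.det, himg, ← Equiv.prod_comp φ]
  exact Finset.prod_congr rfl fun c _ => key c


/-- If `E0` is the set of edges of `G` in no perfect 2-matching and
`G₁, …, G_k` are the connected components of `G - E0`, then
`det G = ∏ᵢ det Gᵢ`. -/
theorem det_eq_prod_components {V : Type*} [Fintype V] (G : SimpleGraph V) :
    detG G =
      ∏ c : (G.deleteEdges (E0 G)).ConnectedComponent,
        detG ((G.deleteEdges (E0 G)).induce c.supp) := by
  simp only [detG, adjM]
  rw [det_deleteEdges_E0]
  convert det_adj_eq_prod_components (G.deleteEdges (E0 G))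

end SignInv
end

section
/- Every K2-reducible finite simple graph has a unique perfect 2-matching, and this unique perfect 2-matching is a perfect matching. -/
open scoped Classical

namespace SignInv

variable {V : Type*} {W : Type*}

/-- Auxiliary notion: `H` is a "perfect 2-matching of `G` on the vertex set `s`". -/
def Cond [Fintype V] (G : SimpleGraph V) (s : Set V) (H : G.Subgraph) : Prop :=
  H.verts = s ∧ (∀ v ∈ s, H.degree v = 1 ∨ H.degree v = 2) ∧
    ∀ v w : V, H.Adj v w → H.degree v = 1 → H.degree w = 1

lemma deg_one_of_unique [Fintype V] {G : SimpleGraph V} (H : G.Subgraph) (v u : V)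
    (hadj : H.Adj v u) (huniq : ∀ w, H.Adj v w → w = u) : H.degree v = 1 :=
  SimpleGraph.Subgraph.degree_eq_one_iff_existsUnique_adj.2 ⟨u, hadj, fun w hw => huniq w hw⟩

lemma exists_adj_of_deg [Fintype V] {G : SimpleGraph V} (H : G.Subgraph) (v : V)
    (h : H.degree v ≠ 0) : ∃ w, H.Adj v w := by
  rw [SimpleGraph.Subgraph.degree] at h
  obtain ⟨⟨w, hw⟩⟩ := Fintype.card_pos_iff.1 (Nat.pos_of_ne_zero h)
  exact ⟨w, hw⟩

lemma degree_congr [Fintype V] {G : SimpleGraph V} (H H' : G.Subgraph) (v : V)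
    (h : ∀ w, H.Adj v w ↔ H'.Adj v w) : H.degree v = H'.degree v := by
  rw [SimpleGraph.Subgraph.degree, SimpleGraph.Subgraph.degree]
  exact Fintype.card_congr (Equiv.setCongr (Set.ext fun w => h w))

attribute [-instance] SimpleGraph.Subgraph.instDecidableRel_induce_adj

theorem mainInd [Fintype V] (G : SimpleGraph V) (s : Set V)
    (hs : Relation.ReflTransGen (K2Step G) s ∅) :
    (∃! H : G.Subgraph, Cond G s H) ∧
      ∀ H : G.Subgraph, Cond G s H → ∀ v ∈ s, H.degree v = 1 := by
  induction hs using Relation.ReflTransGen.head_induction_on with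
  | refl =>
    refine ⟨⟨⊥, ⟨SimpleGraph.Subgraph.verts_bot, by simp, by simp⟩, ?_⟩, ?_⟩
    · rintro H ⟨hv, -, -⟩
      ext a b
      · simp [hv, SimpleGraph.Subgraph.verts_bot]
      · constructor
        · intro hab
          exact absurd (hv ▸ H.edge_vert hab) (Set.notMem_empty a)
        · intro hab
          exact absurd hab SimpleGraph.Subgraph.not_bot_adj
    · rintro H ⟨hv, -, -⟩ x hx
      exact absurd hx (by simp)
  | head hstep htail ih =>
    rename_i s t
    obtain ⟨u, v, hu, hv, huv, hvn, ht⟩ := hstep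
    have hne : u ≠ v := fun h => G.irrefl (h ▸ huv)
    have hut : u ∉ t := by simp [ht]
    have hvt : v ∉ t := by simp [ht]
    have hsts : t ⊆ s := ht ▸ Set.diff_subset
    have huvs : ({u, v} : Set V) ⊆ s := by
      rintro x (rfl | rfl); exacts [hu, hv]
    have hts : t ∪ {u, v} = s := by
      rw [ht, Set.diff_union_of_subset huvs]
    have hsub_adj : ∀ a b : V, (G.subgraphOfAdj huv).Adj a b ↔
        (a = u ∧ b = v) ∨ (a = v ∧ b = u) := by
      intro a b
      show s(u, v) = s(a, b) ↔ _
      rw [Sym2.eq_iff]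
      constructor
      · rintro (⟨rfl, rfl⟩ | ⟨rfl, rfl⟩); exacts [Or.inl ⟨rfl, rfl⟩, Or.inr ⟨rfl, rfl⟩]
      · rintro (⟨rfl, rfl⟩ | ⟨rfl, rfl⟩); exacts [Or.inl ⟨rfl, rfl⟩, Or.inr ⟨rfl, rfl⟩]
    -- analysis of any Cond on s
    have key : ∀ H : G.Subgraph, Cond G s H →
        H.degree u = 1 ∧ H.degree v = 1 ∧ Cond G t (H.deleteVerts {u, v}) ∧
        (∀ w ∈ t, (H.deleteVerts {u, v}).degree w = H.degree w) ∧
        H = H.deleteVerts {u, v} ⊔ G.subgraphOfAdj huv := by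
      intro H ⟨hverts, hdeg, hmatch⟩
      have hAdjV : ∀ w, H.Adj v w → w = u := by
        intro w hw
        exact hvn w (hverts ▸ H.edge_vert hw.symm) (H.adj_sub hw)
      have hvdeg : H.degree v = 1 := by
        obtain ⟨w, hw⟩ := exists_adj_of_deg H v (by rcases hdeg v hv with h | h <;> omega)
        exact deg_one_of_unique H v u (hAdjV w hw ▸ hw) hAdjV
      have hHuv : H.Adj v u := by
        obtain ⟨w, hw⟩ := exists_adj_of_deg H v (by omega)
        exact hAdjV w hw ▸ hw
      have hudeg : H.degree u = 1 := hmatch v u hHuv hvdeg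
      have hAdjU : ∀ w, H.Adj u w → w = v := by
        obtain ⟨w, hw, huniq⟩ := SimpleGraph.Subgraph.degree_eq_one_iff_existsUnique_adj.1 hudeg
        intro x hx
        rw [huniq x hx, ← huniq v hHuv.symm]
      set H' := H.deleteVerts {u, v} with hH'
      have hH'verts : H'.verts = t := by
        rw [hH', SimpleGraph.Subgraph.deleteVerts_verts, hverts, ht]
      have hadj_iff : ∀ w ∈ t, ∀ x, H'.Adj w x ↔ H.Adj w x := by
        intro w hw x
        rw [SimpleGraph.Subgraph.deleteVerts_adj]
        constructor
        · intro h; exact h.2.2.2.2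
        · intro h
          have hxu : x ≠ u := by
            intro hx; subst hx
            exact hvt ((hAdjU w h.symm).symm ▸ hw)
          have hxv : x ≠ v := by
            intro hx; subst hx
            exact hut ((hAdjV w h.symm).symm ▸ hw)
          have hwuv : w ∉ ({u, v} : Set V) := by
            rw [ht] at hw; exact hw.2
          refine ⟨by rw [hverts]; exact hsts hw, hwuv, H.edge_vert h.symm, by simp [hxu, hxv], h⟩
      have hdegeq : ∀ w ∈ t, H'.degree w = H.degree w := by
        intro w hw; exact degree_congr H' H w (fun x => hadj_iff w hw x)
      have hcond' : Cond G t H' := by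
        refine ⟨hH'verts, ?_, ?_⟩
        · intro w hw; rw [hdegeq w hw]; exact hdeg w (hsts hw)
        · intro a b hab h1
          have hat : a ∈ t := hH'verts ▸ H'.edge_vert hab
          have hbt : b ∈ t := hH'verts ▸ H'.edge_vert hab.symm
          rw [hdegeq b hbt]
          rw [hdegeq a hat] at h1
          exact hmatch a b ((hadj_iff a hat b).1 hab) h1
      refine ⟨hudeg, hvdeg, hcond', hdegeq, ?_⟩
      ext a b
      · simp only [SimpleGraph.Subgraph.verts_sup, hH'verts, SimpleGraph.subgraphOfAdj]
        rw [hverts, ← hts]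
      · rw [SimpleGraph.Subgraph.sup_adj]
        constructor
        · intro hab
          by_cases hat : a ∈ t
          · exact Or.inl ((hadj_iff a hat b).2 hab)
          · have has : a ∈ s := by rw [← hverts]; exact H.edge_vert hab
            have : a = u ∨ a = v := by
              rw [ht] at hat; simp only [Set.mem_diff, has, true_and, not_not] at hat
              simpa using hat
            rcases this with rfl | rfl
            · exact Or.inr ((hsub_adj a b).2 (Or.inl ⟨rfl, hAdjU b hab⟩))
            · exact Or.inr ((hsub_adj a b).2 (Or.inr ⟨rfl, hAdjV b hab⟩))
        · rintro (hab | hab)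
          · exact (SimpleGraph.Subgraph.deleteVerts_adj.1 hab).2.2.2.2
          · rcases (hsub_adj a b).1 hab with ⟨rfl, rfl⟩ | ⟨rfl, rfl⟩
            exacts [hHuv.symm, hHuv]
    obtain ⟨⟨H0, hH0, hH0uniq⟩, ihdeg⟩ := ih
    have hH0deg : ∀ w ∈ t, H0.degree w = 1 := ihdeg H0 hH0
    -- the candidate on s
    set Hc : G.Subgraph := H0 ⊔ G.subgraphOfAdj huv with hHc
    have hH0vu : ∀ x, ¬ H0.Adj u x := fun x hx => hut (hH0.1 ▸ H0.edge_vert hx)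
    have hH0vv : ∀ x, ¬ H0.Adj v x := fun x hx => hvt (hH0.1 ▸ H0.edge_vert hx)
    have hcadj_u : ∀ x, Hc.Adj u x ↔ x = v := by
      intro x
      rw [SimpleGraph.Subgraph.sup_adj]
      constructor
      · rintro (h | h)
        · exact absurd h (hH0vu x)
        · rcases (hsub_adj u x).1 h with ⟨-, rfl⟩ | ⟨rfl, -⟩
          · rfl
          · exact absurd rfl hne
      · rintro rfl
        exact Or.inr ((hsub_adj u _).2 (Or.inl ⟨rfl, rfl⟩))
    have hcadj_v : ∀ x, Hc.Adj v x ↔ x = u := by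
      intro x
      rw [SimpleGraph.Subgraph.sup_adj]
      constructor
      · rintro (h | h)
        · exact absurd h (hH0vv x)
        · rcases (hsub_adj v x).1 h with ⟨rfl, -⟩ | ⟨-, rfl⟩
          · exact absurd rfl hne
          · rfl
      · rintro rfl
        exact Or.inr ((hsub_adj v _).2 (Or.inr ⟨rfl, rfl⟩))
    have hcadj_t : ∀ w ∈ t, ∀ x, Hc.Adj w x ↔ H0.Adj w x := by
      intro w hw x
      rw [SimpleGraph.Subgraph.sup_adj]
      constructor
      · rintro (h | h)
        · exact h
        · exfalso
          rcases (hsub_adj w x).1 h with ⟨rfl, -⟩ | ⟨rfl, -⟩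
          exacts [hut hw, hvt hw]
      · exact Or.inl
    have hcverts : Hc.verts = s := by
      rw [hHc, SimpleGraph.Subgraph.verts_sup, hH0.1]
      show t ∪ {u, v} = s
      exact hts
    have hcdeg : ∀ x ∈ s, Hc.degree x = 1 := by
      intro x hx
      by_cases hxu : x = u
      · subst hxu
        exact deg_one_of_unique Hc x v ((hcadj_u v).2 rfl) (fun w hw => (hcadj_u w).1 hw)
      by_cases hxv : x = v
      · subst hxv
        exact deg_one_of_unique Hc x u ((hcadj_v u).2 rfl) (fun w hw => (hcadj_v w).1 hw)
      have hxt : x ∈ t := by rw [ht]; exact ⟨hx, by simp [hxu, hxv]⟩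
      rw [degree_congr Hc H0 x (hcadj_t x hxt)]
      exact hH0deg x hxt
    have hccond : Cond G s Hc :=
      ⟨hcverts, fun w hw => Or.inl (hcdeg w hw),
        fun a b hab _ => hcdeg b (hcverts ▸ Hc.edge_vert hab.symm)⟩
    refine ⟨⟨Hc, hccond, ?_⟩, ?_⟩
    · intro H hH
      obtain ⟨-, -, hcond', -, hrec⟩ := key H hH
      rw [hrec, hH0uniq _ hcond']
    · intro H hH x hx
      obtain ⟨hud, hvd, hcond', hdegeq, -⟩ := key H hH
      by_cases hxu : x = u
      · exact hxu ▸ hud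
      by_cases hxv : x = v
      · exact hxv ▸ hvd
      have hxt : x ∈ t := by rw [ht]; exact ⟨hx, by simp [hxu, hxv]⟩
      rw [← hdegeq x hxt]
      exact ihdeg _ hcond' x hxt


/-- A `K₂`-reducible graph has a unique perfect 2-matching, and this
unique perfect 2-matching is a perfect matching. -/
theorem k2Reducible_unique_perfect2Matching {V : Type*} [Fintype V] (G : SimpleGraph V)
    (h : K2Reducible G) :
    (∃! H : G.Subgraph, IsPerfect2Matching G H) ∧
    ∀ H : G.Subgraph, IsPerfect2Matching G H → H.IsPerfectMatching := by
  have hmain := mainInd G Set.univ h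
  have hiff : ∀ H : G.Subgraph, IsPerfect2Matching G H ↔ Cond G Set.univ H := by
    intro H
    constructor
    · rintro ⟨hs, hd, hm⟩
      exact ⟨SimpleGraph.Subgraph.isSpanning_iff.1 hs, fun v _ => hd v, hm⟩
    · rintro ⟨hs, hd, hm⟩
      exact ⟨SimpleGraph.Subgraph.isSpanning_iff.2 hs, fun v => hd v (Set.mem_univ v), hm⟩
  obtain ⟨⟨H0, hH0, huniq⟩, hdeg⟩ := hmain
  refine ⟨⟨H0, (hiff H0).2 hH0, fun H hH => huniq H ((hiff H).1 hH)⟩, ?_⟩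
  intro H hH
  have hc := (hiff H).1 hH
  refine ⟨SimpleGraph.Subgraph.isMatching_iff_forall_degree.2 ?_,
    SimpleGraph.Subgraph.isSpanning_iff.2 hc.1⟩
  intro v _
  exact hdeg H hc v (Set.mem_univ v)


end SignInv
end

section
/- Let G be a finite simple graph and let H be any graph obtained from G by a sequence of K2-reductions such that H has no vertex of degree one (a K2-irreducible subgraph of G). Then G is invertible if and only if H is invertible; in particular, if G is K2-reducible then G is invertible. -/
open scoped Classical

namespace SignInv

variable {V : Type*} {W : Type*}

open Equiv Equiv.Perm Finset in
lemma det_swap_pair {α : Type*} [Fintype α] [DecidableEq α] (M : Matrix α α ℚ)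
    (u v : α) (huv : u ≠ v)
    (hrow : ∀ w, w ≠ u → M v w = 0) (hcol : ∀ w, w ≠ u → M w v = 0) :
    M.det = -(M u v * M v u) *
      (M.submatrix (Subtype.val : {x : α // x ≠ u ∧ x ≠ v} → α) Subtype.val).det := by
  classical
  set p : α → Prop := fun x => x ≠ u ∧ x ≠ v with hp
  have hPu : ¬ p u := fun h => h.1 rfl
  have hPv : ¬ p v := fun h => h.2 rfl
  rw [Matrix.det_apply', Matrix.det_apply']
  have hfil : ∑ σ : Perm α, ((Equiv.Perm.sign σ : ℤ) : ℚ) * ∏ i, M (σ i) i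
      = ∑ σ ∈ Finset.univ.filter (fun σ : Perm α => σ u = v ∧ σ v = u),
        ((Equiv.Perm.sign σ : ℤ) : ℚ) * ∏ i, M (σ i) i := by
    refine (Finset.sum_filter_of_ne ?_).symm
    intro σ _ hne
    by_contra hσ
    push_neg at hσ
    apply hne
    by_cases hu : σ u = v
    · have hz : M (σ v) v = 0 := hcol _ (hσ hu)
      exact mul_eq_zero_of_right _ (Finset.prod_eq_zero (Finset.mem_univ v) hz)
    · have h1 : σ⁻¹ v ≠ u := by
        intro h; apply hu; rw [← h]; simp
      have hz : M (σ (σ⁻¹ v)) (σ⁻¹ v) = 0 := by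
        rw [show σ (σ⁻¹ v) = v by simp]; exact hrow _ h1
      exact mul_eq_zero_of_right _ (Finset.prod_eq_zero (Finset.mem_univ (σ⁻¹ v)) hz)
  rw [hfil, Finset.mul_sum]
  symm
  refine Finset.sum_bij' (fun (τ : Perm (Subtype p)) _ => Equiv.swap u v * Equiv.Perm.ofSubtype τ)
    (fun σ hσ => Equiv.Perm.subtypePerm (Equiv.swap u v * σ) ?_)
    (fun τ _ => ?_) (fun σ hσ => Finset.mem_univ _) (fun τ _ => ?_) (fun σ hσ => ?_)
    (fun τ _ => ?_)
  · -- property preserved for subtypePerm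
    intro x
    simp only [Finset.mem_filter, Finset.mem_univ, true_and] at hσ
    obtain ⟨h1, h2⟩ := hσ
    have f := Equiv.swap u v * σ
    have fu : (Equiv.swap u v * σ) u = u := by simp [h1]
    have fv : (Equiv.swap u v * σ) v = v := by simp [h2]
    constructor
    · rintro ⟨hxu, hxv⟩
      exact ⟨fun h => hxu (by rw [h, fu]), fun h => hxv (by rw [h, fv])⟩
    · rintro ⟨hxu, hxv⟩
      exact ⟨fun h => hxu ((Equiv.swap u v * σ).injective (h.trans fu.symm)),
        fun h => hxv ((Equiv.swap u v * σ).injective (h.trans fv.symm))⟩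
  · -- Φ τ lands in filter
    simp only [Finset.mem_filter, Finset.mem_univ, true_and]
    constructor
    · rw [Equiv.Perm.mul_apply, Equiv.Perm.ofSubtype_apply_of_not_mem τ hPu,
        Equiv.swap_apply_left]
    · rw [Equiv.Perm.mul_apply, Equiv.Perm.ofSubtype_apply_of_not_mem τ hPv,
        Equiv.swap_apply_right]
  · -- Ψ (Φ τ) = τ
    refine Equiv.ext fun x => Subtype.ext ?_
    show (Equiv.swap u v * (Equiv.swap u v * Equiv.Perm.ofSubtype τ)) ↑x = ↑(τ x)
    rw [← mul_assoc, Equiv.swap_mul_self, one_mul,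
      Equiv.Perm.ofSubtype_apply_of_mem τ x.2]
  · -- Φ (Ψ σ) = σ
    simp only [Finset.mem_filter, Finset.mem_univ, true_and] at hσ
    obtain ⟨h1, h2⟩ := hσ
    have fu : (Equiv.swap u v * σ) u = u := by simp [h1]
    have fv : (Equiv.swap u v * σ) v = v := by simp [h2]
    rw [Equiv.Perm.ofSubtype_subtypePerm]
    · rw [← mul_assoc, Equiv.swap_mul_self, one_mul]
    · intro x hx
      by_contra hpx
      simp only [hp, not_and_or, not_not] at hpx
      rcases hpx with rfl | rfl
      · exact hx fu
      · exact hx fv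
  · -- term equality
    have hsign : ((Equiv.Perm.sign (Equiv.swap u v * Equiv.Perm.ofSubtype τ) : ℤ) : ℚ)
        = -((Equiv.Perm.sign τ : ℤ) : ℚ) := by
      rw [map_mul, Equiv.Perm.sign_swap huv, Equiv.Perm.sign_ofSubtype]
      simp
    have hprod : ∏ i, M ((Equiv.swap u v * Equiv.Perm.ofSubtype τ) i) i
        = (M v u * M u v) * ∏ x : Subtype p, M ((τ x : α)) (x : α) := by
      rw [← Finset.prod_mul_prod_compl ({u, v} : Finset α)]
      congr 1
      · rw [Finset.prod_pair huv]
        congr 1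
        · rw [Equiv.Perm.mul_apply, Equiv.Perm.ofSubtype_apply_of_not_mem τ hPu,
            Equiv.swap_apply_left]
        · rw [Equiv.Perm.mul_apply, Equiv.Perm.ofSubtype_apply_of_not_mem τ hPv,
            Equiv.swap_apply_right]
      · rw [Finset.prod_subtype (p := fun x => x ≠ u ∧ x ≠ v) (({u, v} : Finset α)ᶜ)
          (fun x => by simp [hp, not_or])
          (fun x => M ((Equiv.swap u v * Equiv.Perm.ofSubtype τ) x) x)]
        refine Finset.prod_congr rfl fun x _ => ?_
        congr 1
        rw [Equiv.Perm.mul_apply, Equiv.Perm.ofSubtype_apply_of_mem τ x.2,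
          Equiv.swap_apply_of_ne_of_ne (τ x).2.1 (τ x).2.2]
    rw [hsign, hprod]
    simp only [Matrix.submatrix_apply]
    ring


lemma adjM_induce {V : Type*} [Fintype V] (G : SimpleGraph V) (s : Set V)
    (a b : ↥s) : adjM (G.induce s) a b = if G.Adj ↑a ↑b then 1 else 0 := by
  rw [adjM, SimpleGraph.adjMatrix_apply]
  by_cases h : G.Adj ↑a ↑b
  · rw [if_pos (show (SimpleGraph.induce s G).Adj a b from h), if_pos h]
  · rw [if_neg (show ¬(SimpleGraph.induce s G).Adj a b from h), if_neg h]

lemma detG_univ {V : Type*} [Fintype V] (G : SimpleGraph V) {s : Set V}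
    (hs : s = Set.univ) : detG (G.induce s) = detG G := by
  let e : ↥s ≃ V :=
    ⟨fun x => ↑x, fun x => ⟨x, hs ▸ trivial⟩, fun x => rfl, fun x => rfl⟩
  have he : adjM (G.induce s) = (adjM G).submatrix e e := by
    ext a b
    rw [Matrix.submatrix_apply, adjM_induce, adjM, SimpleGraph.adjMatrix_apply]
    rfl
  rw [detG, he, detG]
  convert Matrix.det_submatrix_equiv_self e (adjM G) using 2

lemma detG_empty {V : Type*} [Fintype V] (G : SimpleGraph V) {s : Set V}
    (hs : s = ∅) : detG (G.induce s) = 1 := by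
  haveI : IsEmpty ↥s := ⟨fun x => by rw [hs] at x; exact x.2⟩
  rw [detG]
  convert Matrix.det_isEmpty using 2
  exact this

set_option maxHeartbeats 1600000 in
lemma detG_step {V : Type*} [Fintype V] (G : SimpleGraph V) {s t : Set V}
    (h : K2Step G s t) : detG (G.induce s) = - detG (G.induce t) := by
  obtain ⟨u, v, hu, hv, hadj, huniq, ht⟩ := h
  set M := adjM (G.induce s) with hM
  have huvne : u ≠ v := hadj.ne
  set u' : ↥s := ⟨u, hu⟩ with hu'
  set v' : ↥s := ⟨v, hv⟩ with hv'
  have huv' : u' ≠ v' := fun hh => huvne (congrArg Subtype.val hh)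
  have hrow : ∀ w : ↥s, w ≠ u' → M v' w = 0 := by
    intro w hw
    rw [hM, adjM_induce, if_neg]
    intro hadj2
    exact hw (Subtype.ext (huniq _ w.2 hadj2))
  have hcol : ∀ w : ↥s, w ≠ u' → M w v' = 0 := by
    intro w hw
    rw [hM, adjM_induce, if_neg]
    intro hadj2
    exact hw (Subtype.ext (huniq _ w.2 hadj2.symm))
  have hMuv : M u' v' = 1 := by rw [hM, adjM_induce, if_pos hadj]
  have hMvu : M v' u' = 1 := by rw [hM, adjM_induce, if_pos hadj.symm]
  have hdet := det_swap_pair M u' v' huv' hrow hcol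
  have hmem : ∀ x : ↥t, (↑x : V) ∈ s \ ({u, v} : Set V) := fun x => ht ▸ x.2
  let e : ↥t ≃ {x : ↥s // x ≠ u' ∧ x ≠ v'} :=
  { toFun := fun x => ⟨⟨x.1, (hmem x).1⟩,
      fun hh => (hmem x).2 (Or.inl (congrArg Subtype.val hh)),
      fun hh => (hmem x).2 (Or.inr (congrArg Subtype.val hh))⟩
    invFun := fun y => ⟨y.1.1, ht.symm ▸ (⟨y.1.2, fun hm => by
      rcases hm with hm | hm
      · exact y.2.1 (Subtype.ext hm)
      · exact y.2.2 (Subtype.ext hm)⟩ : (y.1.1 : V) ∈ s \ ({u, v} : Set V))⟩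
    left_inv := fun x => rfl
    right_inv := fun y => rfl }
  have he : adjM (G.induce t)
      = (M.submatrix (Subtype.val : {x : ↥s // x ≠ u' ∧ x ≠ v'} → ↥s)
          Subtype.val).submatrix e e := by
    ext a b
    simp only [Matrix.submatrix_apply]
    rw [adjM_induce, hM, adjM_induce]
    rfl
  rw [detG, detG, he, ← hM]
  have key : M.det
      = -((M.submatrix (Subtype.val : {x : ↥s // x ≠ u' ∧ x ≠ v'} → ↥s) Subtype.val).det) := by
    rw [hdet, hMuv, hMvu]; ring
  have key2 : (((M.submatrix (Subtype.val : {x : ↥s // x ≠ u' ∧ x ≠ v'} → ↥s)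
      Subtype.val).submatrix ⇑e ⇑e)).det
      = (M.submatrix (Subtype.val : {x : ↥s // x ≠ u' ∧ x ≠ v'} → ↥s) Subtype.val).det :=
    Matrix.det_submatrix_equiv_self e _
  convert key.trans (congrArg (fun z : ℚ => -z) key2.symm) using 2
  congr!

lemma detG_chain {V : Type*} [Fintype V] (G : SimpleGraph V) {s t : Set V}
    (hc : Relation.ReflTransGen (K2Step G) s t) :
    detG (G.induce s) = detG (G.induce t) ∨
      detG (G.induce s) = - detG (G.induce t) := by
  induction hc with
  | refl => exact Or.inl rfl
  | tail hab hbc ih =>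
    have hstep := detG_step G hbc
    rcases ih with h | h
    · right; rw [h, hstep]
    · left; rw [h, hstep, neg_neg]


/-- If `s` induces a `K₂`-irreducible subgraph of `G`, then `G` is
invertible iff it is; in particular a `K₂`-reducible graph is invertible. -/
theorem invertible_iff_k2Irreducible {V : Type*} [Fintype V] (G : SimpleGraph V)
    (s : Set V) (h : K2Irreducible G s) :
    (InvertibleGraph G ↔ InvertibleGraph (G.induce s)) ∧
    (K2Reducible G → InvertibleGraph G) := by
  obtain ⟨hchain, -⟩ := h
  have h1 := detG_chain G hchain
  rw [detG_univ G rfl] at h1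
  constructor
  · unfold InvertibleGraph
    rcases h1 with h1 | h1 <;> rw [h1] <;> simp
  · intro hred
    have h2 := detG_chain G hred
    rw [detG_univ G rfl, detG_empty G rfl] at h2
    unfold InvertibleGraph
    rcases h2 with h2 | h2 <;> rw [h2] <;> norm_num

end SignInv
end

section
/- Let G be a sign-invertible finite simple graph. Then either G is K2-reducible, or every K2-irreducible subgraph of G is unimodular. -/
open scoped Classical

namespace SignInv

variable {V : Type*} {W : Type*}

/-- `Matrix.det` does not depend on the instances. -/
lemma det_irrel {n : Type*} (d1 d2 : DecidableEq n) (f1 f2 : Fintype n)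
    (M : Matrix n n ℚ) :
    @Matrix.det n d1 f1 ℚ _ M = @Matrix.det n d2 f2 ℚ _ M := by
  have h1 : d1 = d2 := funext fun a => funext fun b => Subsingleton.elim _ _
  subst h1
  have h2 : f1 = f2 := Subsingleton.elim _ _
  subst h2
  rfl

lemma detG_eq_det {n : Type*} [Fintype n] [DecidableEq n] (G : SimpleGraph n) :
    detG G = (G.adjMatrix ℚ).det := by
  unfold detG adjM
  exact det_irrel _ _ _ _ _

lemma detG_irrel {n : Type*} (f1 f2 : Fintype n) (G : SimpleGraph n) :
    @detG n f1 G = @detG n f2 G := by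
  have h : f1 = f2 := Subsingleton.elim _ _
  subst h
  rfl

/-- Determinant of a matrix with a "pendant" pair `u, v`. -/
lemma det_pendant {n : Type*} {m : Type*} [Fintype n] [DecidableEq n] [Fintype m]
    (A : Matrix n n ℚ) (u v : n) (g : m → n)
    (huv : u ≠ v) (hginj : Function.Injective g)
    (hgu : ∀ w, g w ≠ u ∧ g w ≠ v)
    (hgsurj : ∀ x : n, x ≠ u → x ≠ v → ∃ w, g w = x)
    (huu : A u u = 0)
    (hrow : ∀ w, A v w = if w = u then 1 else 0)
    (hcol : ∀ w, A w v = if w = u then 1 else 0) :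
    A.det = - (A.submatrix g g).det := by
  classical
  let e : m ⊕ Fin 2 ≃ n :=
    { toFun := Sum.elim g ![u, v]
      invFun := fun w =>
        if h1 : w = u then Sum.inr 0 else if h2 : w = v then Sum.inr 1 else
          Sum.inl (Classical.choose (hgsurj w h1 h2))
      left_inv := by
        rintro (w | i)
        · have h1 : g w ≠ u := (hgu w).1
          have h2 : g w ≠ v := (hgu w).2
          simp only [Sum.elim_inl, dif_neg h1, dif_neg h2]
          refine (dif_neg h1).trans ((dif_neg h2).trans ?_)
          exact congrArg Sum.inl (hginj (Classical.choose_spec (hgsurj (g w) h1 h2)))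
        · fin_cases i <;> simp [huv, huv.symm]
      right_inv := by
        intro w
        by_cases h1 : w = u
        · simp [h1]
        · by_cases h2 : w = v
          · simp [h1, h2, huv.symm]
          · simp only [dif_neg h1, dif_neg h2, Sum.elim_inl]
            exact Classical.choose_spec (hgsurj w h1 h2) }
  have hdet : A.det = (A.submatrix e e).det :=
    (Matrix.det_submatrix_equiv_self e A).symm
  set M := A.submatrix e e with hM
  have hD : M.toBlocks₂₂ = !![0, 1; 1, 0] := by
    ext i j
    fin_cases i <;> fin_cases j <;>
      simp [Matrix.toBlocks₂₂, M, e, hrow, hcol, huu, huv, huv.symm]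
  have hDD : M.toBlocks₂₂ * M.toBlocks₂₂ = 1 := by
    rw [hD]
    ext i j
    fin_cases i <;> fin_cases j <;>
      simp [Matrix.mul_apply, Fin.sum_univ_two, Matrix.one_apply]
  letI : Invertible M.toBlocks₂₂ := ⟨M.toBlocks₂₂, hDD, hDD⟩
  have hInv : ⅟ M.toBlocks₂₂ = M.toBlocks₂₂ := rfl
  have hzero : M.toBlocks₁₂ * ⅟ M.toBlocks₂₂ * M.toBlocks₂₁ = 0 := by
    rw [hInv]
    ext w w'
    have h1 : M.toBlocks₁₂ w 1 = 0 := by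
      simp [Matrix.toBlocks₁₂, M, e, hcol, (hgu w).1]
    have h2 : M.toBlocks₂₁ 1 w' = 0 := by
      simp [Matrix.toBlocks₂₁, M, e, hrow, (hgu w').1]
    have hd00 : M.toBlocks₂₂ 0 0 = 0 := by rw [hD]; simp
    simp only [Matrix.mul_apply, Fin.sum_univ_two, Matrix.zero_apply]
    rw [h1, h2, hd00]
    ring
  have hdetD : M.toBlocks₂₂.det = -1 := by
    rw [hD, Matrix.det_fin_two_of]; norm_num
  have hkey : M.det = M.toBlocks₂₂.det *
      (M.toBlocks₁₁ - M.toBlocks₁₂ * ⅟ M.toBlocks₂₂ * M.toBlocks₂₁).det := by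
    conv_lhs => rw [← Matrix.fromBlocks_toBlocks M]
    exact Matrix.det_fromBlocks₂₂ _ _ _ _
  have hB : M.toBlocks₁₁ = A.submatrix g g := by
    ext w w'; rfl
  rw [hdet, hkey, hzero, sub_zero, hdetD, hB]
  ring

/-- A `K₂`-reduction step negates the determinant of the induced subgraph. -/
lemma detG_k2Step {V : Type*} [Fintype V] {G : SimpleGraph V} {s t : Set V}
    (h : K2Step G s t) : detG (G.induce s) = - detG (G.induce t) := by
  classical
  obtain ⟨u, v, hu, hv, hadj, huniq, ht⟩ := h
  subst ht
  set u' : ↥s := ⟨u, hu⟩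
  set v' : ↥s := ⟨v, hv⟩
  have huv' : u' ≠ v' := by
    intro hh
    exact G.ne_of_adj hadj (congrArg Subtype.val hh)
  set A := adjM (G.induce s) with hA
  have hAentry : ∀ x y : ↥s, A x y = if G.Adj (x : V) (y : V) then 1 else 0 := by
    intro x y
    simp [hA, adjM, SimpleGraph.adjMatrix]
  have huu : A u' u' = 0 := by
    rw [hAentry]; simp
  have hrow : ∀ w : ↥s, A v' w = if w = u' then 1 else 0 := by
    intro w
    rw [hAentry]
    by_cases hw : w = u'
    · simp [hw, hadj.symm]; exact hadj.symm
    · have : ¬ G.Adj v (w : V) := by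
        intro hvw
        exact hw (Subtype.ext (huniq (w : V) w.2 hvw))
      simp [this, hw]; exact this
  have hcol : ∀ w : ↥s, A w v' = if w = u' then 1 else 0 := by
    intro w
    rw [hAentry]
    by_cases hw : w = u'
    · simp [hw, hadj]; exact hadj
    · have : ¬ G.Adj (w : V) v := by
        intro hvw
        exact hw (Subtype.ext (huniq (w : V) w.2 hvw.symm))
      simp [this, hw]; exact this
  let g : ↥(s \ {u, v}) → ↥s := fun x => ⟨(x : V), x.2.1⟩
  have hginj : Function.Injective g := by
    intro a b hab
    exact Subtype.ext (congrArg (fun z : ↥s => (z : V)) hab)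
  have hgu : ∀ w, g w ≠ u' ∧ g w ≠ v' := by
    intro w
    constructor
    · intro hh
      exact w.2.2 (Or.inl (congrArg Subtype.val hh))
    · intro hh
      exact w.2.2 (Or.inr (congrArg Subtype.val hh))
  have hgsurj : ∀ x : ↥s, x ≠ u' → x ≠ v' → ∃ w, g w = x := by
    intro x h1 h2
    refine ⟨⟨(x : V), x.2, ?_⟩, rfl⟩
    intro hh
    rcases hh with hh | hh
    · exact h1 (Subtype.ext hh)
    · exact h2 (Subtype.ext hh)
  have hp := det_pendant A u' v' g huv' hginj hgu hgsurj huu hrow hcol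
  have hsub : (G.induce (s \ {u, v})).adjMatrix ℚ = A.submatrix g g := by
    ext x y
    simp [SimpleGraph.adjMatrix, Matrix.submatrix_apply, hAentry, g]
  have hd1 : detG (G.induce s) = A.det := detG_eq_det _
  have hgoal : detG (G.induce s) =
      - ((G.induce (s \ {u, v})).adjMatrix ℚ).det := by
    rw [hd1, hp, ← hsub]
    exact congrArg Neg.neg (det_irrel _ _ _ _ _)
  exact hgoal.trans (congrArg Neg.neg
    (((detG_eq_det _).symm).trans (detG_irrel _ _ _)))

/-- Determinant is an integer when the entries are. -/
lemma det_int_of_entries {n : Type*} [Fintype n] [DecidableEq n] (M : Matrix n n ℚ)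
    (h : ∀ x y, ∃ k : ℤ, (k : ℚ) = M x y) : ∃ k : ℤ, (k : ℚ) = M.det := by
  choose f hf using h
  refine ⟨(Matrix.of f).det, ?_⟩
  rw [show ((((Matrix.of f).det : ℤ) : ℚ)) = (Int.castRingHom ℚ) (Matrix.of f).det from rfl,
    RingHom.map_det]
  congr 1
  ext x y
  simp [hf x y]

lemma unimodular_of_signInvertible {V : Type*} [Fintype V] (G : SimpleGraph V)
    (h : SignInvertible G) : Unimodular G := by
  classical
  obtain ⟨hA, hB⟩ := h
  set A := adjM G with hAdef
  have hdetu : IsUnit A.det := (Matrix.isUnit_iff_isUnit_det A).1 hA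
  have hmul : A.det * A⁻¹.det = 1 := by
    rw [← Matrix.det_mul, Matrix.mul_nonsing_inv A hdetu, Matrix.det_one]
  obtain ⟨a, ha⟩ : ∃ a : ℤ, (a : ℚ) = A.det := by
    apply det_int_of_entries
    intro x y
    by_cases hxy : G.Adj x y
    · exact ⟨1, by simp [hAdef, adjM, hxy]⟩
    · exact ⟨0, by simp [hAdef, adjM, hxy]⟩
  obtain ⟨b, hb⟩ : ∃ b : ℤ, (b : ℚ) = A⁻¹.det := by
    apply det_int_of_entries
    intro x y
    have hxy := hB x y
    simp only [Set.mem_insert_iff, Set.mem_singleton_iff] at hxy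
    rcases hxy with h1 | h1 | h1
    · exact ⟨-1, by rw [h1]; push_cast; ring⟩
    · exact ⟨0, by rw [h1]; norm_num⟩
    · exact ⟨1, by rw [h1]; norm_num⟩
  have hab : a * b = 1 := by
    have : ((a * b : ℤ) : ℚ) = ((1 : ℤ) : ℚ) := by
      push_cast; rw [ha, hb]; exact hmul
    exact_mod_cast this
  have : a = 1 ∨ a = -1 := Int.isUnit_iff.1 (IsUnit.of_mul_eq_one b hab)
  have hd : detG G = A.det := detG_eq_det G
  rcases this with h1 | h1
  · left; rw [hd, ← ha, h1]; norm_num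
  · right; rw [hd, ← ha, h1]; norm_num

lemma unimodular_induce_univ {V : Type*} [Fintype V] {s : Set V} [Fintype ↥s]
    (G : SimpleGraph V) (hs : ∀ v, v ∈ s) :
    detG (G.induce s) = detG G := by
  let e : ↥s ≃ V :=
    { toFun := Subtype.val
      invFun := fun v => ⟨v, hs v⟩
      left_inv := fun x => rfl
      right_inv := fun x => rfl }
  have h1 : (G.induce s).adjMatrix ℚ = (G.adjMatrix ℚ).submatrix e e := by
    ext x y
    simp [SimpleGraph.adjMatrix, Matrix.submatrix_apply, e]
  have hd1 : detG (G.induce s) = ((G.induce s).adjMatrix ℚ).det := detG_eq_det _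
  have hd2 : detG G = (G.adjMatrix ℚ).det := detG_eq_det _
  rw [hd1, hd2, h1, Matrix.det_submatrix_equiv_self]

/-- If `G` is sign-invertible then `G` is `K₂`-reducible or every
`K₂`-irreducible subgraph of `G` is unimodular. -/
theorem signInvertible_k2Irreducible_unimodular {V : Type*} [Fintype V]
    (G : SimpleGraph V) (h : SignInvertible G) :
    K2Reducible G ∨ ∀ s : Set V, K2Irreducible G s → Unimodular (G.induce s) := by
  right
  intro s hs
  obtain ⟨hreach, -⟩ := hs
  have hG := unimodular_of_signInvertible G h
  induction hreach with
  | refl =>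
    rcases hG with h1 | h1
    · left
      rw [detG_irrel _ Set.fintypeUniv (G.induce Set.univ),
        @unimodular_induce_univ V _ Set.univ Set.fintypeUniv G (fun v => trivial)]
      exact h1
    · right
      rw [detG_irrel _ Set.fintypeUniv (G.induce Set.univ),
        @unimodular_induce_univ V _ Set.univ Set.fintypeUniv G (fun v => trivial)]
      exact h1
  | tail _ hstep ih =>
    have hneg := detG_k2Step hstep
    rcases ih with h1 | h1
    · right; rw [h1] at hneg; linarith
    · left; rw [h1] at hneg; linarith

end SignInv
end

section
/- Let G be a finite simple graph with a unique perfect 2-matching. If G is sign-invertible, then G is K2-reducible. -/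
open scoped Classical

namespace SignInv

variable {V : Type*} {W : Type*}

set_option linter.unusedSectionVars false

section Aux
open Matrix
variable [Fintype V]

noncomputable def AM (G : SimpleGraph V) (s : Set V) : Matrix s s ℚ :=
  Matrix.of fun i j => if G.Adj i j then 1 else 0

def SignInvOn (G : SimpleGraph V) (s : Set V) : Prop :=
  IsUnit (AM G s) ∧ ∀ x y : s, (AM G s)⁻¹ x y ∈ ({-1, 0, 1} : Set ℚ)

noncomputable def AM2 (G : SimpleGraph V) (s : Set V) : Matrix s s (ZMod 2) :=
  Matrix.of fun i j => if G.Adj i j then 1 else 0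

lemma AM_symm (G : SimpleGraph V) (s : Set V) : (AM G s)ᵀ = AM G s := by
  ext i j
  simp only [Matrix.transpose_apply, AM, Matrix.of_apply]
  by_cases h : G.Adj i j
  · simp [h, h.symm]
  · have h' : ¬ G.Adj (j:V) i := fun hh => h hh.symm
    simp [h, h']

lemma AM_inv_symm (G : SimpleGraph V) (s : Set V) : ∀ x y : s, (AM G s)⁻¹ x y = (AM G s)⁻¹ y x := by
  intro x y
  have h := Matrix.transpose_nonsing_inv (AM G s)
  rw [AM_symm] at h
  calc (AM G s)⁻¹ x y = ((AM G s)⁻¹)ᵀ y x := rfl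
    _ = (AM G s)⁻¹ y x := by rw [h]

/-- Sign-invertibility on `s` forces the mod-2 determinant to be 1. -/
lemma det_AM2_eq_one {G : SimpleGraph V} {s : Set V} (h : SignInvOn G s) :
    (AM2 G s).det = 1 := by
  -- integer versions
  set AZ : Matrix s s ℤ := Matrix.of fun i j => if G.Adj i j then 1 else 0 with hAZ
  set BZ : Matrix s s ℤ := Matrix.of fun i j =>
    if (AM G s)⁻¹ i j = 1 then 1 else if (AM G s)⁻¹ i j = -1 then -1 else 0 with hBZ
  have hAmap : (Int.castRingHom ℚ).mapMatrix AZ = AM G s := by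
    ext i j
    simp only [RingHom.mapMatrix_apply, Matrix.map_apply, hAZ, Matrix.of_apply, AM]
    split <;> simp
  have hBmap : (Int.castRingHom ℚ).mapMatrix BZ = (AM G s)⁻¹ := by
    ext i j
    have := h.2 i j
    simp only [Set.mem_insert_iff, Set.mem_singleton_iff] at this
    simp only [RingHom.mapMatrix_apply, Matrix.map_apply, hBZ, Matrix.of_apply]
    rcases this with h1 | h1 | h1 <;> rw [h1] <;> norm_num
  have hmul : AM G s * (AM G s)⁻¹ = 1 := by
    apply Matrix.mul_nonsing_inv
    exact ((Matrix.isUnit_iff_isUnit_det _).mp h.1)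
  have e1 : (Int.castRingHom ℚ) AZ.det = (AM G s).det := by
    rw [RingHom.map_det, hAmap]
  have e2 : (Int.castRingHom ℚ) BZ.det = ((AM G s)⁻¹).det := by
    rw [RingHom.map_det, hBmap]
  have hdet : AZ.det * BZ.det = 1 := by
    have : ((AZ.det * BZ.det : ℤ) : ℚ) = ((1 : ℤ) : ℚ) := by
      rw [Int.cast_mul, Int.cast_one]
      have : ((AZ.det : ℚ)) * ((BZ.det : ℚ)) = (AM G s).det * ((AM G s)⁻¹).det := by
        rw [← e1, ← e2]; rfl
      rw [this, ← Matrix.det_mul, hmul, Matrix.det_one]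
    exact_mod_cast this
  have hunit : IsUnit AZ.det := IsUnit.of_mul_eq_one _ hdet
  have hpm : AZ.det = 1 ∨ AZ.det = -1 := Int.isUnit_iff.mp hunit
  have hmap2 : (Int.castRingHom (ZMod 2)).mapMatrix AZ = AM2 G s := by
    ext i j
    simp only [RingHom.mapMatrix_apply, Matrix.map_apply, hAZ, Matrix.of_apply, AM2]
    split <;> simp
  have : (AM2 G s).det = ((AZ.det : ℤ) : ZMod 2) := by
    have := RingHom.map_det (Int.castRingHom (ZMod 2)) AZ
    rw [hmap2] at this
    rw [← this]; rfl
  rw [this]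
  rcases hpm with h1 | h1 <;> rw [h1] <;> decide


/-- perfect 2-matching on vertex set `s` -/
def P2M {V : Type*} [Fintype V] (G : SimpleGraph V) (s : Set V) (H : G.Subgraph) : Prop :=
  H.verts = s ∧ (∀ v ∈ s, H.degree v = 1 ∨ H.degree v = 2) ∧
    ∀ v w : V, H.Adj v w → H.degree v = 1 → H.degree w = 1

lemma degree_eq_one_of_nbrs {G : SimpleGraph V} (H : G.Subgraph) (v a : V)
    [Fintype (H.neighborSet v)]
    (h : H.neighborSet v = {a}) : H.degree v = 1 := by
  rw [SimpleGraph.Subgraph.degree_eq_one_iff_existsUnique_adj]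
  refine ⟨a, ?_, ?_⟩
  · have : a ∈ H.neighborSet v := by rw [h]; exact rfl
    exact this
  · intro y hy
    have : y ∈ H.neighborSet v := hy
    rw [h] at this
    exact this

lemma degree_eq_two_of_nbrs {G : SimpleGraph V} (H : G.Subgraph) (v a b : V)
    [Fintype (H.neighborSet v)]
    (h : H.neighborSet v = {a, b}) (hab : a ≠ b) : H.degree v = 2 := by
  unfold SimpleGraph.Subgraph.degree
  calc Fintype.card ↑(H.neighborSet v) = Fintype.card ↥({a, b} : Set V) :=
        Fintype.card_congr (Equiv.setCongr h)
    _ = 2 := by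
        rw [← Set.toFinset_card]
        rw [Set.toFinset_insert, Set.toFinset_singleton]
        exact Finset.card_pair hab

lemma degree_congr_s10 {G : SimpleGraph V} (H : G.Subgraph) (v : V)
    (i1 i2 : Fintype (H.neighborSet v)) :
    @SimpleGraph.Subgraph.degree V G H v i1 = @SimpleGraph.Subgraph.degree V G H v i2 := by
  congr!

lemma nbrs_of_degree_one {G : SimpleGraph V} (H : G.Subgraph) (v : V)
    [Fintype (H.neighborSet v)]
    (h : H.degree v = 1) : ∃! w, H.Adj v w :=
  SimpleGraph.Subgraph.degree_eq_one_iff_existsUnique_adj.mp h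


variable {G : SimpleGraph V} {s : Set V}

/-- The subgraph built from a compatible permutation of `s`. -/
noncomputable def permSub (G : SimpleGraph V) (s : Set V) (σ : Equiv.Perm s)
    (hc : ∀ i : s, G.Adj (σ i : V) (i : V)) : G.Subgraph where
  verts := s
  Adj a b := ∃ (ha : a ∈ s) (hb : b ∈ s), σ ⟨a, ha⟩ = ⟨b, hb⟩ ∨ σ ⟨b, hb⟩ = ⟨a, ha⟩
  adj_sub := by
    rintro a b ⟨ha, hb, h | h⟩
    · have := hc ⟨a, ha⟩
      rw [h] at this
      exact this.symm
    · have := hc ⟨b, hb⟩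
      rw [h] at this
      exact this
  edge_vert := by rintro a b ⟨ha, hb, _⟩; exact ha
  symm := by
    constructor
    rintro a b ⟨ha, hb, h⟩
    exact ⟨hb, ha, h.symm⟩

lemma permSub_nbrs (σ : Equiv.Perm s) (hc : ∀ i : s, G.Adj (σ i : V) (i : V))
    (v : V) (hv : v ∈ s) :
    (permSub G s σ hc).neighborSet v = {(σ ⟨v, hv⟩ : V), (σ.symm ⟨v, hv⟩ : V)} := by
  ext x
  constructor
  · rintro ⟨ha, hx, h | h⟩
    · left
      rw [h]
    · right
      have : σ.symm ⟨v, ha⟩ = ⟨x, hx⟩ := by rw [← h]; simp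
      rw [this]
      exact rfl
  · rintro (h | h)
    · have hx : x ∈ s := by rw [h]; exact (σ ⟨v, hv⟩).2
      refine ⟨hv, hx, Or.inl ?_⟩
      apply Subtype.ext
      exact h.symm
    · have hx : x ∈ s := by rw [h]; exact (σ.symm ⟨v, hv⟩).2
      refine ⟨hv, hx, Or.inr ?_⟩
      apply Subtype.ext
      have : σ ⟨x, hx⟩ = σ (σ.symm ⟨v, hv⟩) := by
        congr 1
        apply Subtype.ext
        exact h
      rw [this]
      simp

lemma permSub_p2m (σ : Equiv.Perm s) (hc : ∀ i : s, G.Adj (σ i : V) (i : V)) :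
    P2M G s (permSub G s σ hc) := by
  have hdeg : ∀ (v : V) (hv : v ∈ s),
      (σ ⟨v, hv⟩ = σ.symm ⟨v, hv⟩ → (permSub G s σ hc).degree v = 1) ∧
      (σ ⟨v, hv⟩ ≠ σ.symm ⟨v, hv⟩ → (permSub G s σ hc).degree v = 2) := by
    intro v hv
    constructor
    · intro he
      apply degree_eq_one_of_nbrs _ v (σ ⟨v, hv⟩ : V)
      rw [permSub_nbrs σ hc v hv, ← he]
      simp
    · intro he
      apply degree_eq_two_of_nbrs _ v (σ ⟨v, hv⟩ : V) (σ.symm ⟨v, hv⟩ : V)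
        (permSub_nbrs σ hc v hv)
      intro hcontra
      exact he (Subtype.ext hcontra)
  refine ⟨rfl, ?_, ?_⟩
  · intro v hv
    by_cases he : σ ⟨v, hv⟩ = σ.symm ⟨v, hv⟩
    · exact Or.inl ((hdeg v hv).1 he)
    · exact Or.inr ((hdeg v hv).2 he)
  · intro v w hadj hdv
    obtain ⟨hv, hw, hor⟩ := hadj
    -- first: σ ⟨v⟩ = σ.symm ⟨v⟩
    have he : σ ⟨v, hv⟩ = σ.symm ⟨v, hv⟩ := by
      by_contra hne
      rw [(hdeg v hv).2 hne] at hdv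
      norm_num at hdv
    -- w is σ ⟨v⟩
    have hw' : σ ⟨v, hv⟩ = ⟨w, hw⟩ := by
      rcases hor with h | h
      · exact h
      · rw [he]
        rw [← h]
        simp
    have : σ ⟨w, hw⟩ = σ.symm ⟨w, hw⟩ := by
      have h1 : σ.symm ⟨w, hw⟩ = ⟨v, hv⟩ := by rw [← hw']; simp
      have h2 : σ ⟨w, hw⟩ = ⟨v, hv⟩ := by
        rw [← hw', he]
        simp
      rw [h1, h2]
    exact (hdeg w hw).1 this

/-- If the 2-matching on `s` is unique and `G` is sign-invertible on `s`, then every vertex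
has degree 1 in it (the matching has no cycle components). -/
lemma p2m_degree_one {M : G.Subgraph} (hM : P2M G s M)
    (huniq : ∀ N : G.Subgraph, P2M G s N → N = M) (hsi : SignInvOn G s) :
    ∀ v ∈ s, M.degree v = 1 := by
  by_contra hcon
  push_neg at hcon
  obtain ⟨v0, hv0, hd0⟩ := hcon
  have hd2 : M.degree v0 = 2 := (hM.2.1 v0 hv0).resolve_left hd0
  have hdet1 : (AM2 G s).det = 1 := det_AM2_eq_one hsi
  have hdet0 : (AM2 G s).det = 0 := by
    rw [Matrix.det_apply]
    have hsmul : ∀ σ : Equiv.Perm s,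
        Equiv.Perm.sign σ • ∏ i : s, AM2 G s (σ i) i = ∏ i : s, AM2 G s (σ i) i := by
      intro σ
      rcases Int.units_eq_one_or (Equiv.Perm.sign σ) with h | h <;> rw [h]
      · simp
      · simp only [Units.smul_def, Units.val_neg, Units.val_one, neg_smul, one_smul]
        exact CharTwo.neg_eq _
    rw [Finset.sum_congr rfl (fun σ _ => hsmul σ)]
    apply Finset.sum_involution (fun σ _ => σ⁻¹)
    · intro σ _
      have hre : ∏ i : s, AM2 G s (σ⁻¹ i) i = ∏ i : s, AM2 G s (σ i) i := by
        have h1 : ∏ i : s, AM2 G s (σ⁻¹ (σ i)) (σ i) = ∏ i : s, AM2 G s (σ⁻¹ i) i :=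
          Equiv.prod_comp σ (fun i => AM2 G s (σ⁻¹ i) i)
        rw [← h1]
        apply Finset.prod_congr rfl
        intro i _
        rw [show σ⁻¹ (σ i) = i from σ.symm_apply_apply i]
        show (if G.Adj (i : V) (σ i : V) then (1 : ZMod 2) else 0)
          = (if G.Adj (σ i : V) (i : V) then (1 : ZMod 2) else 0)
        by_cases h : G.Adj (i : V) (σ i : V)
        · rw [if_pos h, if_pos h.symm]
        · rw [if_neg h, if_neg (fun hh => h hh.symm)]
      rw [hre]
      exact CharTwo.add_self_eq_zero _
    · intro σ _ hne
      -- σ is compatible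
      have hc : ∀ i : s, G.Adj (σ i : V) (i : V) := by
        intro i
        by_contra hadj
        apply hne
        rw [Finset.prod_eq_zero (Finset.mem_univ i)]
        show (if G.Adj (σ i : V) (i : V) then (1 : ZMod 2) else 0) = 0
        rw [if_neg hadj]
      have hP := permSub_p2m σ hc
      have hEq := huniq _ hP
      -- degree of v0 in permSub is degree in M = 2
      have hdeg2 : (permSub G s σ hc).degree v0 = 2 := by
        rw [hEq]
        exact hd2
      have hne2 : σ ⟨v0, hv0⟩ ≠ σ.symm ⟨v0, hv0⟩ := by
        intro he
        have := degree_eq_one_of_nbrs (permSub G s σ hc) v0 (σ ⟨v0, hv0⟩ : V) ?_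
        · rw [this] at hdeg2
          norm_num at hdeg2
        · rw [permSub_nbrs σ hc v0 hv0, ← he]
          simp
      intro hσ
      apply hne2
      have : σ⁻¹ ⟨v0, hv0⟩ = σ ⟨v0, hv0⟩ := by rw [hσ]
      rw [← this]
      rfl
    · intro σ _; exact inv_inv σ
    · intro σ _; exact Finset.mem_univ _
  rw [hdet0] at hdet1
  exact zero_ne_one hdet1


/-- If the unique 2-matching is a perfect matching and `s` is nonempty, then `s` contains a
pendant pair (a vertex whose only neighbour in `s` is its matching partner). -/
lemma exists_pendant {M : G.Subgraph} (hM : P2M G s M)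
    (huniq : ∀ N : G.Subgraph, P2M G s N → N = M)
    (hdeg1 : ∀ v ∈ s, M.degree v = 1) (hs : s.Nonempty) :
    ∃ v ∈ s, ∃ u ∈ s, G.Adj u v ∧ (∀ w ∈ s, G.Adj v w → w = u) := by
  by_contra hnp
  push_neg at hnp
  -- the matching function m
  have hMadj : ∀ v, v ∈ s → ∃ w, M.Adj v w ∧ ∀ w', M.Adj v w' → w' = w := by
    intro v hv
    obtain ⟨w, hw, hu⟩ := nbrs_of_degree_one M v (hdeg1 v hv)
    exact ⟨w, hw, hu⟩
  set m : V → V := fun v => if h : v ∈ s then (hMadj v h).choose else v with hm_def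
  have hmadj : ∀ v (hv : v ∈ s), M.Adj v (m v) := by
    intro v hv
    simp only [hm_def, dif_pos hv]
    exact (hMadj v hv).choose_spec.1
  have hmu : ∀ v (hv : v ∈ s) w, M.Adj v w → w = m v := by
    intro v hv w hw
    simp only [hm_def, dif_pos hv]
    exact (hMadj v hv).choose_spec.2 w hw
  have hmmem : ∀ v, v ∈ s → m v ∈ s := by
    intro v hv
    have := M.edge_vert ((hmadj v hv).symm)
    rwa [hM.1] at this
  have hminv : ∀ v, v ∈ s → m (m v) = v := by
    intro v hv
    exact (hmu (m v) (hmmem v hv) v (hmadj v hv).symm).symm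
  have hmne : ∀ v, v ∈ s → m v ≠ v := by
    intro v hv h
    have := (hmadj v hv).adj_sub
    rw [h] at this
    exact G.irrefl this
  have hminj : ∀ v w, v ∈ s → w ∈ s → m v = m w → v = w := by
    intro v w hv hw h
    have : m (m v) = m (m w) := by rw [h]
    rwa [hminv v hv, hminv w hw] at this
  -- the second-neighbour function g
  have hg' : ∀ v, v ∈ s → ∃ w, w ∈ s ∧ G.Adj v w ∧ w ≠ m v := by
    intro v hv
    have := hnp v hv (m v) (hmmem v hv) ((hmadj v hv).adj_sub).symm
    obtain ⟨w, hws, hadj, hwne⟩ := this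
    exact ⟨w, hws, hadj, hwne⟩
  set g : V → V := fun v => if h : v ∈ s then (hg' v h).choose else v with hg_def
  have hgmem : ∀ v, v ∈ s → g v ∈ s := by
    intro v hv
    simp only [hg_def, dif_pos hv]
    exact (hg' v hv).choose_spec.1
  have hgadj : ∀ v (hv : v ∈ s), G.Adj v (g v) := by
    intro v hv
    simp only [hg_def, dif_pos hv]
    exact (hg' v hv).choose_spec.2.1
  have hgne : ∀ v (hv : v ∈ s), g v ≠ m v := by
    intro v hv
    simp only [hg_def, dif_pos hv]
    exact (hg' v hv).choose_spec.2.2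
  -- the function f
  set f : V → V := fun v => m (g v) with hf_def
  have hfmem : ∀ v, v ∈ s → f v ∈ s := fun v hv => hmmem _ (hgmem v hv)
  have hffix : ∀ v, v ∈ s → f v ≠ v := by
    intro v hv h
    have h2 : m (m (g v)) = m v := by
      show m (f v) = m v
      rw [h]
    rw [hminv _ (hgmem v hv)] at h2
    exact hgne v hv h2
  have hgf : ∀ v, v ∈ s → g v = m (f v) := by
    intro v hv
    show g v = m (m (g v))
    rw [hminv _ (hgmem v hv)]
  -- find a periodic point
  obtain ⟨y0, hy0⟩ := hs
  have hiter : ∀ n, f^[n] y0 ∈ s := by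
    intro n
    induction n with
    | zero => exact hy0
    | succ k ih =>
      rw [Function.iterate_succ_apply']
      exact hfmem _ ih
  obtain ⟨a, b, hab, heq⟩ := Finite.exists_ne_map_eq_of_infinite (fun n : ℕ => f^[n] y0)
  -- wlog a < b
  obtain ⟨a, b, hlt, heq⟩ : ∃ a b : ℕ, a < b ∧ f^[a] y0 = f^[b] y0 := by
    rcases lt_or_gt_of_ne hab with h | h
    · exact ⟨a, b, h, heq⟩
    · exact ⟨b, a, h, heq.symm⟩
  set y : V := f^[a] y0 with hy_def
  have hy : y ∈ s := hiter a
  have hk0 : f^[b - a] y = y := by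
    rw [hy_def, ← Function.iterate_add_apply, Nat.sub_add_cancel hlt.le, ← heq]
  have hk0pos : 0 < b - a := Nat.sub_pos_of_lt hlt
  -- minimal period
  have hex : ∃ n, 0 < n ∧ f^[n] y = y := ⟨b - a, hk0pos, hk0⟩
  set p : ℕ := Nat.find hex with hp_def
  have hp_pos : 0 < p := (Nat.find_spec hex).1
  have hp_per : f^[p] y = y := (Nat.find_spec hex).2
  have hp_min : ∀ n, 0 < n → n < p → f^[n] y ≠ y := by
    intro n hn hnp' hne'
    exact Nat.find_min hex hnp' ⟨hn, hne'⟩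
  set x : ℕ → V := fun i => f^[i] y with hx_def
  have hxmem : ∀ i, x i ∈ s := by
    intro i
    rw [hx_def, hy_def]
    simp only [← Function.iterate_add_apply]
    exact hiter _
  have hxsucc : ∀ i, x (i + 1) = f (x i) := by
    intro i
    rw [hx_def]
    simp [Function.iterate_succ_apply']
  have hper : ∀ i, x (i + p) = x i := by
    intro i
    show f^[i + p] y = f^[i] y
    rw [Function.iterate_add_apply, hp_per]
  -- g on the orbit
  have hgx : ∀ i, g (x i) = m (x (i + 1)) := by
    intro i
    rw [hxsucc i]
    exact hgf _ (hxmem i)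
  set O : Set V := Set.range x with hO_def
  have hOmem : ∀ i, x i ∈ O := fun i => ⟨i, rfl⟩
  have hOsub : O ⊆ s := by
    rintro v ⟨i, rfl⟩
    exact hxmem i
  -- uniqueness of the in-orbit g-preimage
  have hBuniq : ∀ b1 b2, b1 ∈ O → b2 ∈ O → g b1 = g b2 → b1 = b2 := by
    rintro b1 b2 ⟨i, rfl⟩ ⟨i', rfl⟩ hgb
    rw [hgx i, hgx i'] at hgb
    have h1 : x (i + 1) = x (i' + 1) := hminj _ _ (hxmem _) (hxmem _) hgb
    have h2 : f^[p - 1] (x (i + 1)) = f^[p - 1] (x (i' + 1)) := by rw [h1]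
    have h3 : ∀ i : ℕ, f^[p - 1] (x (i + 1)) = x i := by
      intro i
      show f^[p-1] (f^[i+1] y) = f^[i] y
      rw [← Function.iterate_add_apply]
      have : p - 1 + (i + 1) = i + p := by omega
      rw [this]
      exact hper i
    rw [h3, h3] at h2
    exact h2
  -- existence of in-orbit g-preimage
  have hBex : ∀ v, v ∈ s → m v ∈ O → ∃ w, w ∈ O ∧ g w = v := by
    rintro v hv ⟨j, hj⟩
    refine ⟨x (j + p - 1), hOmem _, ?_⟩
    rw [hgx (j + p - 1)]
    have he : j + p - 1 + 1 = j + p := by omega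
    rw [he, hper, hj, hminv v hv]
  -- if some orbit element has g-value v, then m v is in the orbit
  have hOc : ∀ v, v ∈ s → ∀ b, b ∈ O → g b = v → m v ∈ O := by
    rintro v hv b ⟨i, rfl⟩ hgb
    rw [hgx i] at hgb
    have : m v = x (i + 1) := by
      rw [← hgb, hminv _ (hxmem (i + 1))]
    exact ⟨i + 1, this.symm⟩
  -- the competing subgraph
  set N' : G.Subgraph :=
    { verts := s
      Adj := fun a b => a ∈ s ∧ b ∈ s ∧
        ((a ∈ O ∧ b = g a) ∨ (b ∈ O ∧ a = g b) ∨
          (b = m a ∧ a = m b ∧ ¬(a ∈ O ∧ b ∈ O)))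
      adj_sub := by
        rintro a b ⟨ha, hb, (⟨haO, rfl⟩ | ⟨hbO, rfl⟩ | ⟨hba, hab', hnO⟩)⟩
        · exact hgadj a ha
        · exact (hgadj b hb).symm
        · rw [hba]
          exact (hmadj a ha).adj_sub
      edge_vert := by
        rintro a b ⟨ha, _, _⟩
        exact ha
      symm := by
        constructor
        rintro a b ⟨ha, hb, (h | h | ⟨h1, h2, h3⟩)⟩
        · exact ⟨hb, ha, Or.inr (Or.inl h)⟩
        · exact ⟨hb, ha, Or.inl h⟩
        · exact ⟨hb, ha, Or.inr (Or.inr ⟨h2, h1, fun hh => h3 ⟨hh.2, hh.1⟩⟩)⟩ } with hN'_def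
  have hAdjIff : ∀ v, v ∈ s → ∀ b, (N'.Adj v b ↔
      ((v ∈ O ∧ b = g v) ∨ (b ∈ O ∧ v = g b) ∨ (b = m v ∧ ¬(v ∈ O ∧ b ∈ O)))) := by
    intro v hv b
    constructor
    · rintro ⟨_, _, (h | h | ⟨h1, h2, h3⟩)⟩
      · exact Or.inl h
      · exact Or.inr (Or.inl h)
      · exact Or.inr (Or.inr ⟨h1, h3⟩)
    · rintro (⟨hvO, rfl⟩ | ⟨hbO, rfl⟩ | ⟨hbm, hno⟩)
      · exact ⟨hv, hgmem v hv, Or.inl ⟨hvO, rfl⟩⟩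
      · exact ⟨hv, hOsub hbO, Or.inr (Or.inl ⟨hbO, rfl⟩)⟩
      · refine ⟨hv, by rw [hbm]; exact hmmem v hv, Or.inr (Or.inr ⟨hbm, ?_, hno⟩)⟩
        rw [hbm, hminv v hv]
  -- neighbour set computations
  have hnbr1 : ∀ v, v ∈ s → v ∉ O → m v ∉ O → N'.neighborSet v = {m v} := by
    intro v hv hvO hpO
    ext b
    rw [SimpleGraph.Subgraph.mem_neighborSet, hAdjIff v hv b]
    constructor
    · rintro (⟨h, _⟩ | ⟨hbO, hgb⟩ | ⟨h, _⟩)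
      · exact absurd h hvO
      · exact absurd (hOc v hv b hbO hgb.symm) hpO
      · exact h
    · intro h
      exact Or.inr (Or.inr ⟨h, fun hh => hvO hh.1⟩)
  have hnbr2 : ∀ v, v ∈ s → v ∈ O → m v ∉ O → N'.neighborSet v = {g v, m v} := by
    intro v hv hvO hpO
    ext b
    rw [SimpleGraph.Subgraph.mem_neighborSet, hAdjIff v hv b]
    constructor
    · rintro (⟨_, h⟩ | ⟨hbO, hgb⟩ | ⟨h, _⟩)
      · exact Or.inl h
      · exact absurd (hOc v hv b hbO hgb.symm) hpO
      · exact Or.inr h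
    · rintro (h | h)
      · exact Or.inl ⟨hvO, h⟩
      · exact Or.inr (Or.inr ⟨h, fun hh => hpO (h ▸ hh.2)⟩)
  have hnbr3 : ∀ v, v ∈ s → v ∉ O → ∀ w, w ∈ O → g w = v →
      N'.neighborSet v = {w, m v} := by
    intro v hv hvO w hwO hgw
    ext b
    rw [SimpleGraph.Subgraph.mem_neighborSet, hAdjIff v hv b]
    constructor
    · rintro (⟨h, _⟩ | ⟨hbO, hgb⟩ | ⟨h, _⟩)
      · exact absurd h hvO
      · exact Or.inl (hBuniq b w hbO hwO (by rw [hgw, hgb]))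
      · exact Or.inr h
    · rintro (h | h)
      · subst h
        exact Or.inr (Or.inl ⟨hwO, hgw.symm⟩)
      · exact Or.inr (Or.inr ⟨h, fun hh => hvO hh.1⟩)
  have hnbr4 : ∀ v, v ∈ s → v ∈ O → m v ∈ O → ∀ w, w ∈ O → g w = v →
      N'.neighborSet v = {g v, w} := by
    intro v hv hvO hpO w hwO hgw
    ext b
    rw [SimpleGraph.Subgraph.mem_neighborSet, hAdjIff v hv b]
    constructor
    · rintro (⟨_, h⟩ | ⟨hbO, hgb⟩ | ⟨h, hno⟩)
      · exact Or.inl h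
      · exact Or.inr (hBuniq b w hbO hwO (by rw [hgw, hgb]))
      · exact absurd ⟨hvO, h ▸ hpO⟩ hno
    · rintro (h | h)
      · exact Or.inl ⟨hvO, h⟩
      · subst h
        exact Or.inr (Or.inl ⟨hwO, hgw.symm⟩)
  -- w ≠ m v in case 3
  have hwne3 : ∀ v, v ∈ s → ∀ w, w ∈ O → g w = v → w ≠ m v ∨ v ∈ O := by
    intro v hv w hwO hgw
    by_cases hvO : v ∈ O
    · exact Or.inr hvO
    left
    intro hwm
    have : f w = w := by
      rw [hf_def]
      show m (g w) = w
      rw [hgw, ← hwm]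
    exact hffix w (hOsub hwO) this
  -- degrees of the competing subgraph
  have hdegA : ∀ v, v ∈ s → N'.degree v = 1 ∨ N'.degree v = 2 := by
    intro v hv
    by_cases hvO : v ∈ O
    · by_cases hpO : m v ∈ O
      · obtain ⟨w, hwO, hgw⟩ := hBex v hv hpO
        by_cases hco : g v = w
        · left
          apply degree_eq_one_of_nbrs N' v w
          rw [hnbr4 v hv hvO hpO w hwO hgw, hco]
          simp
        · right
          exact degree_eq_two_of_nbrs N' v (g v) w (hnbr4 v hv hvO hpO w hwO hgw) hco
      · right
        exact degree_eq_two_of_nbrs N' v (g v) (m v) (hnbr2 v hv hvO hpO) (hgne v hv)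
    · by_cases hpO : m v ∈ O
      · obtain ⟨w, hwO, hgw⟩ := hBex v hv hpO
        right
        exact degree_eq_two_of_nbrs N' v w (m v) (hnbr3 v hv hvO w hwO hgw)
          ((hwne3 v hv w hwO hgw).resolve_right hvO)
      · left
        exact degree_eq_one_of_nbrs N' v (m v) (hnbr1 v hv hvO hpO)
  -- degree-one propagation
  have hcond3 : ∀ v b : V, N'.Adj v b → N'.degree v = 1 → N'.degree b = 1 := by
    intro v b hadj hdv
    have hv : v ∈ s := N'.edge_vert hadj
    have hbs : b ∈ s := N'.edge_vert hadj.symm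
    have hbmem : b ∈ N'.neighborSet v := hadj
    by_cases hvO : v ∈ O
    · by_cases hpO : m v ∈ O
      · obtain ⟨w, hwO, hgw⟩ := hBex v hv hpO
        by_cases hco : g v = w
        · -- coincident case: b = w and w has degree one
          have hbw : b = w := by
            rw [hnbr4 v hv hvO hpO w hwO hgw, hco] at hbmem
            simpa using hbmem
          subst hbw
          have hws : b ∈ s := hbs
          obtain ⟨i, hi⟩ := hvO
          have hwm : b = m (x (i + 1)) := by
            rw [← hco, ← hi, hgx]
          have hmwO : m b ∈ O := by
            refine ⟨i + 1, ?_⟩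
            rw [hwm, hminv _ (hxmem _)]
          apply degree_eq_one_of_nbrs N' b v
          rw [hnbr4 b hws hwO hmwO v ⟨i, hi⟩ hco, hgw]
          simp
        · have hd2 := degree_eq_two_of_nbrs N' v (g v) w (hnbr4 v hv hvO hpO w hwO hgw) hco
          rw [hdv] at hd2
          norm_num at hd2
      · have hd2 := degree_eq_two_of_nbrs N' v (g v) (m v) (hnbr2 v hv hvO hpO) (hgne v hv)
        rw [hdv] at hd2
        norm_num at hd2
    · by_cases hpO : m v ∈ O
      · obtain ⟨w, hwO, hgw⟩ := hBex v hv hpO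
        have hd2 := degree_eq_two_of_nbrs N' v w (m v) (hnbr3 v hv hvO w hwO hgw)
          ((hwne3 v hv w hwO hgw).resolve_right hvO)
        rw [hdv] at hd2
        norm_num at hd2
      · have hbm : b = m v := by
          rw [hnbr1 v hv hvO hpO] at hbmem
          simpa using hbmem
        subst hbm
        have h1 : m (m v) = v := hminv v hv
        apply degree_eq_one_of_nbrs N' (m v) v
        have := hnbr1 (m v) (hmmem v hv) hpO (by rw [h1]; exact hvO)
        rw [this, h1]
  have hP2M : P2M G s N' := by
    refine ⟨rfl, ?_, ?_⟩
    · intro v hv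
      rcases hdegA v hv with h | h
      · exact Or.inl ((degree_congr_s10 N' v _ _).trans h)
      · exact Or.inr ((degree_congr_s10 N' v _ _).trans h)
    · intro v b hadj hdv
      exact (degree_congr_s10 N' b _ _).trans
        (hcond3 v b hadj ((degree_congr_s10 N' v _ _).trans hdv))
  have hEq := huniq N' hP2M
  have hyO : y ∈ O := ⟨0, rfl⟩
  have hadj0 : N'.Adj y (g y) := (hAdjIff y hy (g y)).mpr (Or.inl ⟨hyO, rfl⟩)
  rw [hEq] at hadj0
  exact hgne y hy (hmu y hy (g y) hadj0)
lemma degree_eq_of_nbrs_eq {G : SimpleGraph V} {H1 H2 : G.Subgraph} (v : V)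
    [Fintype (H1.neighborSet v)] [Fintype (H2.neighborSet v)]
    (h : H1.neighborSet v = H2.neighborSet v) : H1.degree v = H2.degree v := by
  unfold SimpleGraph.Subgraph.degree
  exact Fintype.card_congr (Equiv.setCongr h)

variable {G : SimpleGraph V} {s : Set V}

/-- Peeling a pendant pair preserves existence and uniqueness of the perfect 2-matching. -/
lemma peel_p2m {M : G.Subgraph} (hM : P2M G s M)
    (huniq : ∀ N : G.Subgraph, P2M G s N → N = M)
    (hdeg1 : ∀ w ∈ s, M.degree w = 1)
    {u v : V} (hu : u ∈ s) (hv : v ∈ s) (hGuv : G.Adj u v)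
    (hpend : ∀ w ∈ s, G.Adj v w → w = u) :
    ∃! N : G.Subgraph, P2M G (s \ {u, v}) N := by
  have huv : u ≠ v := hGuv.ne
  have hMv : M.Adj v u := by
    obtain ⟨w, hw, hwu⟩ := nbrs_of_degree_one M v (hdeg1 v hv)
    have hws : w ∈ s := by rw [← hM.1]; exact M.edge_vert hw.symm
    have := hpend w hws hw.adj_sub
    rwa [← this]
  have hMu : M.Adj u v := hMv.symm
  have hMuu : ∀ w, M.Adj u w → w = v := by
    intro w hw
    obtain ⟨w', hw', hwu'⟩ := nbrs_of_degree_one M u (hdeg1 u hu)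
    rw [hwu' w hw, ← hwu' v hMu]
  have hMvv : ∀ w, M.Adj v w → w = u := by
    intro w hw
    have hws : w ∈ s := by rw [← hM.1]; exact M.edge_vert hw.symm
    exact hpend w hws hw.adj_sub
  set s' : Set V := s \ {u, v} with hs'_def
  set M' : G.Subgraph := M.deleteVerts {u, v} with hM'_def
  have hM'verts : M'.verts = s' := by
    rw [hM'_def, SimpleGraph.Subgraph.deleteVerts_verts, hM.1]
  have hM'adj : ∀ a b : V,
      M'.Adj a b ↔ M.Adj a b ∧ a ∉ ({u, v} : Set V) ∧ b ∉ ({u, v} : Set V) := by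
    intro a b
    rw [hM'_def, SimpleGraph.Subgraph.deleteVerts_adj]
    constructor
    · rintro ⟨_, h2, _, h4, h5⟩
      exact ⟨h5, h2, h4⟩
    · rintro ⟨h1, h2, h3⟩
      exact ⟨M.edge_vert h1, h2, M.edge_vert h1.symm, h3, h1⟩
  have hM'nbrs : ∀ w, w ∈ s' → M'.neighborSet w = M.neighborSet w := by
    intro w hw
    ext b
    simp only [SimpleGraph.Subgraph.mem_neighborSet]
    rw [hM'adj]
    constructor
    · rintro ⟨h, _, _⟩; exact h
    · intro h
      refine ⟨h, hw.2, ?_⟩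
      rintro (rfl | rfl)
      · have : w = v := hMuu w h.symm
        exact hw.2 (by rw [this]; exact Or.inr rfl)
      · have : w = u := hMvv w h.symm
        exact hw.2 (by rw [this]; exact Or.inl rfl)
  have hdeg1' : ∀ w, w ∈ s' → M'.degree w = 1 := fun w hw =>
    (degree_eq_of_nbrs_eq w (hM'nbrs w hw)).trans (hdeg1 w hw.1)
  have hbmem' : ∀ a b : V, M'.Adj a b → b ∈ s' := by
    intro a b h
    rw [← hM'verts]
    exact M'.edge_vert h.symm
  have hP2M' : P2M G s' M' :=
    ⟨hM'verts, fun w hw => Or.inl ((degree_congr_s10 M' w _ _).trans (hdeg1' w hw)),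
      fun a b hadj _ => (degree_congr_s10 M' b _ _).trans (hdeg1' b (hbmem' a b hadj))⟩
  refine ⟨M', hP2M', ?_⟩
  intro N hN
  -- extend N with the edge uv
  set Np : G.Subgraph := N ⊔ G.subgraphOfAdj hGuv with hNp_def
  have hNverts : N.verts = s' := hN.1
  have hNpverts : Np.verts = s := by
    rw [hNp_def, SimpleGraph.Subgraph.verts_sup, hNverts]
    show s' ∪ (G.subgraphOfAdj hGuv).verts = s
    have : (G.subgraphOfAdj hGuv).verts = {u, v} := rfl
    rw [this]
    ext w
    constructor
    · rintro (h | h)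
      · exact h.1
      · rcases h with rfl | rfl
        · exact hu
        · exact hv
    · intro h
      by_cases hw : w ∈ ({u, v} : Set V)
      · exact Or.inr hw
      · exact Or.inl ⟨h, hw⟩
  have hNpadj : ∀ a b : V, Np.Adj a b ↔ N.Adj a b ∨ s(u, v) = s(a, b) := by
    intro a b
    rw [hNp_def, SimpleGraph.Subgraph.sup_adj, SimpleGraph.subgraphOfAdj_adj]
  have hNau : ∀ b, ¬ N.Adj u b := by
    intro b h
    have : u ∈ s' := by rw [← hNverts]; exact N.edge_vert h
    exact this.2 (Or.inl rfl)
  have hNav : ∀ b, ¬ N.Adj v b := by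
    intro b h
    have : v ∈ s' := by rw [← hNverts]; exact N.edge_vert h
    exact this.2 (Or.inr rfl)
  have hnbru : Np.neighborSet u = {v} := by
    ext b
    simp only [SimpleGraph.Subgraph.mem_neighborSet]
    rw [hNpadj]
    constructor
    · rintro (h | h)
      · exact absurd h (hNau b)
      · rw [Sym2.eq_iff] at h
        rcases h with ⟨_, h2⟩ | ⟨h1, h2⟩
        · exact h2.symm
        · exact absurd h2.symm huv
    · rintro rfl
      exact Or.inr rfl
  have hnbrv : Np.neighborSet v = {u} := by
    ext b
    simp only [SimpleGraph.Subgraph.mem_neighborSet]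
    rw [hNpadj]
    constructor
    · rintro (h | h)
      · exact absurd h (hNav b)
      · rw [Sym2.eq_iff] at h
        rcases h with ⟨h1, h2⟩ | ⟨h1, _⟩
        · exact absurd h1 huv
        · exact h1.symm
    · rintro rfl
      refine Or.inr ?_
      rw [Sym2.eq_iff]
      exact Or.inr ⟨rfl, rfl⟩
  have hnbrw : ∀ w, w ∈ s' → Np.neighborSet w = N.neighborSet w := by
    intro w hw
    ext b
    simp only [SimpleGraph.Subgraph.mem_neighborSet]
    rw [hNpadj]
    constructor
    · rintro (h | h)
      · exact h
      · exfalso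
        rw [Sym2.eq_iff] at h
        rcases h with ⟨h1, _⟩ | ⟨_, h2⟩
        · exact hw.2 (Or.inl h1.symm)
        · exact hw.2 (Or.inr h2.symm)
    · exact Or.inl
  have hdegu : Np.degree u = 1 := degree_eq_one_of_nbrs Np u v hnbru
  have hdegv : Np.degree v = 1 := degree_eq_one_of_nbrs Np v u hnbrv
  have hP2Mp : P2M G s Np := by
    refine ⟨hNpverts, ?_, ?_⟩
    · intro w hw
      by_cases hwu : w = u
      · subst hwu; exact Or.inl hdegu
      by_cases hwv : w = v
      · subst hwv; exact Or.inl hdegv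
      have hws' : w ∈ s' := ⟨hw, by rintro (rfl | rfl); exacts [hwu rfl, hwv rfl]⟩
      have := degree_eq_of_nbrs_eq w (hnbrw w hws')
      rcases hN.2.1 w hws' with h | h
      · exact Or.inl (this.trans h)
      · exact Or.inr (this.trans h)
    · intro a b hadj hda
      by_cases hau : a = u
      · have hb : b ∈ Np.neighborSet u := by rw [← hau]; exact hadj
        rw [hnbru] at hb
        have hb' : b = v := hb
        rw [hb']
        exact hdegv
      by_cases hav : a = v
      · have hb : b ∈ Np.neighborSet v := by rw [← hav]; exact hadj
        rw [hnbrv] at hb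
        have hb' : b = u := hb
        rw [hb']
        exact hdegu
      have has : a ∈ s := by rw [← hNpverts]; exact Np.edge_vert hadj
      have has' : a ∈ s' := ⟨has, by rintro (rfl | rfl); exacts [hau rfl, hav rfl]⟩
      have hbN : b ∈ N.neighborSet a := by
        rw [← hnbrw a has']
        exact hadj
      have hNab : N.Adj a b := hbN
      have hNda : N.degree a = 1 :=
        (degree_eq_of_nbrs_eq a (hnbrw a has')).symm.trans hda
      have hNdb : N.degree b = 1 := hN.2.2 a b hNab hNda
      have hbs' : b ∈ s' := by rw [← hNverts]; exact N.edge_vert hNab.symm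
      exact (degree_eq_of_nbrs_eq b (hnbrw b hbs')).trans hNdb
  have hEqM : Np = M := huniq Np hP2Mp
  -- conclude N = M'
  apply SimpleGraph.Subgraph.ext
  · rw [hNverts, hM'verts]
  · funext a b
    apply propext
    constructor
    · intro h
      have hMab : M.Adj a b := by
        rw [← hEqM, hNpadj]
        exact Or.inl h
      have has' : a ∈ s' := by rw [← hNverts]; exact N.edge_vert h
      have hbs' : b ∈ s' := by rw [← hNverts]; exact N.edge_vert h.symm
      exact (hM'adj a b).mpr ⟨hMab, has'.2, hbs'.2⟩
    · intro h
      obtain ⟨hMab, hanuv, hbnuv⟩ := (hM'adj a b).mp h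
      have : Np.Adj a b := by rw [hEqM]; exact hMab
      rw [hNpadj] at this
      rcases this with h' | h'
      · exact h'
      · exfalso
        rw [Sym2.eq_iff] at h'
        rcases h' with ⟨h1, _⟩ | ⟨_, h2⟩
        · exact hanuv (Or.inl h1.symm)
        · exact hanuv (Or.inr h2.symm)
set_option maxHeartbeats 1600000 in
/-- Peeling a pendant pair preserves sign-invertibility. -/
lemma peel_signinv {u v : V} {s' : Set V} (hs'_def : s' = s \ {u, v})
    (hu : u ∈ s) (hv : v ∈ s) (hGuv : G.Adj u v)
    (hpend : ∀ w ∈ s, G.Adj v w → w = u) (hsi : SignInvOn G s) :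
    SignInvOn G s' := by
  classical
  have hmem : ∀ x : s', (x : V) ∈ s ∧ (x : V) ∉ ({u, v} : Set V) := by
    intro x
    have h0 : (x : V) ∈ s' := x.2
    have h1 : (x : V) ∈ s \ {u, v} := by rw [← hs'_def]; exact h0
    exact h1
  set A : Matrix s s ℚ := AM G s with hA_def
  set B : Matrix s s ℚ := (AM G s)⁻¹ with hB_def
  have hmul1 : A * B = 1 := Matrix.mul_nonsing_inv _ ((Matrix.isUnit_iff_isUnit_det _).mp hsi.1)
  set u' : s := ⟨u, hu⟩ with hu'_def
  set v' : s := ⟨v, hv⟩ with hv'_def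
  have huv' : u' ≠ v' := fun h => hGuv.ne (congrArg Subtype.val h)
  set ι : s' → s := fun x => ⟨x.1, (hmem x).1⟩ with hι_def
  have hιu : ∀ x : s', ι x ≠ u' := by
    intro x h
    exact (hmem x).2 (Or.inl (congrArg Subtype.val h))
  have hιv : ∀ x : s', ι x ≠ v' := by
    intro x h
    exact (hmem x).2 (Or.inr (congrArg Subtype.val h))
  -- the row of v in A
  have hvrow : ∀ w : s, A v' w = if w = u' then 1 else 0 := by
    intro w
    show (if G.Adj v w then (1:ℚ) else 0) = if w = u' then 1 else 0
    by_cases h : G.Adj v (w : V)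
    · rw [if_pos h, if_pos (Subtype.ext (hpend w w.2 h))]
    · rw [if_neg h, if_neg ?_]
      intro hw
      apply h
      rw [hw]
      exact hGuv.symm
  -- B's u-row vanishes off v
  have hBu : ∀ x : s, x ≠ v' → B u' x = 0 := by
    intro x hx
    have h1 : (A * B) v' x = if v' = x then 1 else 0 := by rw [hmul1, Matrix.one_apply]
    rw [if_neg (fun h => hx h.symm)] at h1
    rw [Matrix.mul_apply] at h1
    have h2 : ∀ w : s, A v' w * B w x = if w = u' then B u' x else 0 := by
      intro w
      rw [hvrow w]
      by_cases h : w = u'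
      · rw [if_pos h, if_pos h, h, one_mul]
      · rw [if_neg h, if_neg h, zero_mul]
    rw [Finset.sum_congr rfl (fun w _ => h2 w)] at h1
    rw [Finset.sum_ite_eq' Finset.univ u' (fun _ => B u' x)] at h1
    rw [if_pos (Finset.mem_univ _)] at h1
    exact h1
  have hBsymm : ∀ x y : s, B x y = B y x := AM_inv_symm G s
  -- the candidate inverse on s'
  set C : Matrix s' s' ℚ := Matrix.of fun x y => B (ι x) (ι y) with hC_def
  have hCA : C * AM G s' = 1 := by
    ext x y
    rw [Matrix.mul_apply]
    have hentry : ∀ z : s', C x z * AM G s' z y = B (ι x) (ι z) * A (ι z) (ι y) := by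
      intro z
      rfl
    rw [Finset.sum_congr rfl (fun z _ => hentry z)]
    -- compare with the full sum over s
    set F : s → ℚ := fun w => B (ι x) w * A w (ι y) with hF_def
    have hsplit : ∑ w ∈ Finset.univ.filter (fun w : s => (w : V) ∈ s'), F w
        + ∑ w ∈ Finset.univ.filter (fun w : s => ¬ (w : V) ∈ s'), F w
        = ∑ w : s, F w := Finset.sum_filter_add_sum_filter_not _ _ _
    have hT : ∑ z : s', F (ι z)
        = ∑ w ∈ Finset.univ.filter (fun w : s => (w : V) ∈ s'), F w := by
      apply Finset.sum_bij' (fun (z : s') (_ : z ∈ Finset.univ) => ι z)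
        (fun (w : s) (hw : w ∈ Finset.univ.filter (fun w : s => (w : V) ∈ s')) =>
          (⟨(w : V), (Finset.mem_filter.mp hw).2⟩ : s'))
      case hi =>
        intro a _
        rw [Finset.mem_filter]
        exact ⟨Finset.mem_univ _, a.2⟩
      case hj =>
        intro a _
        exact Finset.mem_univ _
      all_goals intro a _
      all_goals rfl
    have hbad : Finset.univ.filter (fun w : s => ¬ (w : V) ∈ s') = {u', v'} := by
      ext w
      rw [Finset.mem_filter]
      constructor
      · rintro ⟨_, hw⟩
        have : (w : V) ∈ ({u, v} : Set V) := by
          by_contra hc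
          apply hw
          rw [hs'_def]
          exact ⟨w.2, hc⟩
        rcases this with h | h
        · exact Finset.mem_insert.mpr (Or.inl (Subtype.ext h))
        · exact Finset.mem_insert.mpr (Or.inr (Finset.mem_singleton.mpr (Subtype.ext h)))
      · intro hw
        refine ⟨Finset.mem_univ _, ?_⟩
        rcases Finset.mem_insert.mp hw with rfl | h
        · intro hc
          rw [hs'_def] at hc
          exact hc.2 (Or.inl rfl)
        · rw [Finset.mem_singleton.mp h]
          intro hc
          rw [hs'_def] at hc
          exact hc.2 (Or.inr rfl)
    have hFu : F u' = 0 := by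
      rw [hF_def]
      show B (ι x) u' * A u' (ι y) = 0
      rw [hBsymm (ι x) u', hBu (ι x) (hιv x), zero_mul]
    have hFv : F v' = 0 := by
      rw [hF_def]
      show B (ι x) v' * A v' (ι y) = 0
      rw [hvrow (ι y), if_neg (hιu y), mul_zero]
    have hfull : ∑ w : s, F w = if x = y then 1 else 0 := by
      have h1 : ∑ w : s, F w = (B * A) (ι x) (ι y) := (Matrix.mul_apply).symm
      have h2 : B * A = 1 := mul_eq_one_comm.mp hmul1
      rw [h1, h2, Matrix.one_apply]
      by_cases h : x = y
      · have h2 : ι x = ι y := by rw [h]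
        rw [if_pos h2, if_pos h]
      · have h2 : ι x ≠ ι y := by
          intro hc
          have h3 : (ι x).val = (ι y).val := congrArg Subtype.val hc
          exact h (Subtype.ext h3)
        rw [if_neg h2, if_neg h]
    have hbadsum : ∑ w ∈ Finset.univ.filter (fun w : s => ¬ (w : V) ∈ s'), F w = 0 := by
      rw [hbad, Finset.sum_pair huv', hFu, hFv, add_zero]
    rw [hT]
    have : ∑ w ∈ Finset.univ.filter (fun w : s => (w : V) ∈ s'), F w = ∑ w : s, F w := by
      rw [← hsplit, hbadsum, add_zero]
    rw [this, hfull, Matrix.one_apply]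
  have hAC : AM G s' * C = 1 := mul_eq_one_comm.mpr hCA
  have hdet : IsUnit (AM G s').det := by
    have : (AM G s').det * C.det = 1 := by rw [← Matrix.det_mul, hAC, Matrix.det_one]
    exact IsUnit.of_mul_eq_one _ this
  refine ⟨(Matrix.isUnit_iff_isUnit_det _).mpr hdet, ?_⟩
  intro x y
  rw [Matrix.inv_eq_left_inv hCA]
  exact hsi.2 (ι x) (ι y)


lemma signInvOn_of_univ {G : SimpleGraph V} {s : Set V} (hall : ∀ x, x ∈ s)
    (hs : SignInvertible G) : SignInvOn G s := by
  classical
  set e : s ≃ V := Equiv.subtypeUnivEquiv hall with he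
  have hA : AM G s = (adjM G).submatrix e e := by
    ext i j
    show (if G.Adj (i : V) (j : V) then (1:ℚ) else 0) = adjM G (e i) (e j)
    have h1 : e i = (i : V) := rfl
    have h2 : e j = (j : V) := rfl
    rw [h1, h2, adjM, SimpleGraph.adjMatrix_apply]
  set B := (adjM G)⁻¹ with hB
  have h1 : adjM G * B = 1 :=
    Matrix.mul_nonsing_inv _ ((Matrix.isUnit_iff_isUnit_det _).mp hs.1)
  have h2 : B * adjM G = 1 := mul_eq_one_comm.mp h1
  set C := B.submatrix e e with hC
  have hCA : C * AM G s = 1 := by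
    rw [hA, hC, Matrix.submatrix_mul_equiv B (adjM G) _ e _, h2, Matrix.submatrix_one_equiv]
  have hAC : AM G s * C = 1 := mul_eq_one_comm.mpr hCA
  constructor
  · rw [Matrix.isUnit_iff_isUnit_det]
    exact IsUnit.of_mul_eq_one C.det (by rw [← Matrix.det_mul, hAC, Matrix.det_one])
  · intro x y
    rw [Matrix.inv_eq_left_inv hCA]
    exact hs.2 (e x) (e y)

lemma reduce (G : SimpleGraph V) :
    ∀ (n : ℕ) (s : Set V), s.ncard = n → (∃! M : G.Subgraph, P2M G s M) →
      SignInvOn G s → Relation.ReflTransGen (K2Step G) s ∅ := by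
  intro n
  induction n using Nat.strong_induction_on with
  | _ n ih =>
    intro s hn hex hsi
    rcases Set.eq_empty_or_nonempty s with rfl | hne
    · exact Relation.ReflTransGen.refl
    obtain ⟨M, hM, huniq'⟩ := hex
    have huniq : ∀ N, P2M G s N → N = M := fun N h => huniq' N h
    have hdeg1 := p2m_degree_one hM huniq hsi
    obtain ⟨v, hv, u, hu, hGuv, hpend⟩ := exists_pendant hM huniq hdeg1 hne
    set t : Set V := s \ {u, v} with ht_def
    have hstep : K2Step G s t := ⟨u, v, hu, hv, hGuv, hpend, ht_def⟩
    have hexist' := peel_p2m hM huniq hdeg1 hu hv hGuv hpend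
    have hsi' := peel_signinv ht_def hu hv hGuv hpend hsi
    have hvt : v ∉ t := by rw [ht_def]; exact fun h => h.2 (Or.inr rfl)
    have hcard : t.ncard < n := by
      rw [← hn]
      apply Set.ncard_lt_ncard ?_ (Set.toFinite s)
      refine ssubset_of_subset_of_ne ?_ ?_
      · rw [ht_def]; exact Set.diff_subset
      · intro he
        rw [he] at hvt
        exact hvt hv
    exact Relation.ReflTransGen.head hstep (ih _ hcard t rfl hexist' hsi')



end Aux

/-- A graph with a unique perfect 2-matching which is sign-invertible is
`K₂`-reducible. -/
theorem signInvertible_unique_perfect2Matching_k2Reducible {V : Type*} [Fintype V]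
    (G : SimpleGraph V) (h : ∃! H : G.Subgraph, IsPerfect2Matching G H)
    (hs : SignInvertible G) : K2Reducible G := by
  classical
  have hP2M : ∃! M : G.Subgraph, P2M G Set.univ M := by
    obtain ⟨M, hM, hu⟩ := h
    refine ⟨M, ?_, ?_⟩
    · exact ⟨SimpleGraph.Subgraph.isSpanning_iff.mp hM.1, fun v _ => hM.2.1 v, hM.2.2⟩
    · intro N hN
      exact hu N ⟨SimpleGraph.Subgraph.isSpanning_iff.mpr hN.1,
        fun v => hN.2.1 v trivial, hN.2.2⟩
  have hsi : SignInvOn G Set.univ := signInvOn_of_univ (fun x => trivial) hs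
  exact reduce G _ Set.univ rfl hP2M hsi

end SignInv
end
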